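/- arXiv:1004.0946 — 6 statements merged into one kernel-verified Lean document; each statement's English description precedes it below -/
import Mathlib

section
/- For any μ ∈ V_n and any α ∈ gl(n,ℝ), one has tr(Ric_μ α) = -¼ ⟨δ_μ(α), μ⟩, i.e. δ_μᵀ(μ) = -4 Ric_μ where δ_μᵀ is the adjoint of δ_μ with respect to the inner products ⟨α,β⟩ = tr(αβᵀ) on gl(n,ℝ) and ⟨μ,λ⟩ = Σ ⟨μ(eᵢ,eⱼ), λ(eᵢ,eⱼ)⟩ on V_n. -/
open Matrix BigOperators

noncomputable section

/-- An element of `V_n`: a skew-symmetric bilinear map `μ : ℝⁿ × ℝⁿ → ℝⁿ`. -/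
def IsSkewBil {n : ℕ} (μ : (Fin n → ℝ) → (Fin n → ℝ) → (Fin n → ℝ)) : Prop :=
  (∀ x, IsLinearMap ℝ (μ x)) ∧ (∀ y, IsLinearMap ℝ (fun x => μ x y)) ∧
  (∀ x y, μ x y = - μ y x)

/-- The matrix of `ad_μ x : y ↦ μ(x,y)` in the canonical basis. -/
def adMat {n : ℕ} (μ : (Fin n → ℝ) → (Fin n → ℝ) → (Fin n → ℝ)) (x : Fin n → ℝ) :
    Matrix (Fin n) (Fin n) ℝ := fun i j => μ x (Pi.single j 1) i

/-- The Ricci operator `Ric_μ = -½ Σᵢ (ad_μ eᵢ)ᵀ(ad_μ eᵢ) + ¼ Σᵢ (ad_μ eᵢ)(ad_μ eᵢ)ᵀ`. -/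
def Ric {n : ℕ} (μ : (Fin n → ℝ) → (Fin n → ℝ) → (Fin n → ℝ)) :
    Matrix (Fin n) (Fin n) ℝ :=
  (-(1/2 : ℝ)) • ∑ i, (adMat μ (Pi.single i 1))ᵀ * adMat μ (Pi.single i 1)
  + (1/4 : ℝ) • ∑ i, adMat μ (Pi.single i 1) * (adMat μ (Pi.single i 1))ᵀ

/-- `δ_μ(α)(x,y) = μ(αx,y) + μ(x,αy) - αμ(x,y)`. -/
def deltaMap {n : ℕ} (μ : (Fin n → ℝ) → (Fin n → ℝ) → (Fin n → ℝ))
    (A : Matrix (Fin n) (Fin n) ℝ) : (Fin n → ℝ) → (Fin n → ℝ) → (Fin n → ℝ) :=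
  fun x y => μ (A.mulVec x) y + μ x (A.mulVec y) - A.mulVec (μ x y)

/-- The inner product `⟨μ,ν⟩ = Σ_{i,j} ⟨μ(eᵢ,eⱼ), ν(eᵢ,eⱼ)⟩` on `V_n`. -/
def innV {n : ℕ} (μ ν : (Fin n → ℝ) → (Fin n → ℝ) → (Fin n → ℝ)) : ℝ :=
  ∑ i, ∑ j, ∑ k,
    μ (Pi.single i 1) (Pi.single j 1) k * ν (Pi.single i 1) (Pi.single j 1) k

/-- `D` is a derivation of the algebra `(ℝⁿ, μ)`. -/
def IsDeriv {n : ℕ} (μ : (Fin n → ℝ) → (Fin n → ℝ) → (Fin n → ℝ))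
    (D : Matrix (Fin n) (Fin n) ℝ) : Prop :=
  ∀ x y, D.mulVec (μ x y) = μ (D.mulVec x) y + μ x (D.mulVec y)

/-- The Jacobi identity. -/
def IsJacobi {n : ℕ} (μ : (Fin n → ℝ) → (Fin n → ℝ) → (Fin n → ℝ)) : Prop :=
  ∀ x y z, μ x (μ y z) + μ y (μ z x) + μ z (μ x y) = 0

/-- `μ` is a nilpotent Lie bracket on `ℝⁿ`. -/
def IsNilBracket {n : ℕ} (μ : (Fin n → ℝ) → (Fin n → ℝ) → (Fin n → ℝ)) : Prop :=
  IsSkewBil μ ∧ IsJacobi μ ∧ ∀ x, IsNilpotent (adMat μ x)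

/-- Structure constants. -/
def cc {n : ℕ} (μ : (Fin n → ℝ) → (Fin n → ℝ) → (Fin n → ℝ)) (i j k : Fin n) : ℝ :=
  μ (Pi.single i 1) (Pi.single j 1) k

lemma sum4_equiv {α : Type*} [Fintype α] (f g : α → α → α → α → ℝ)
    (σ : α×α×α×α ≃ α×α×α×α)
    (h : ∀ p : α×α×α×α, f p.1 p.2.1 p.2.2.1 p.2.2.2
        = g (σ p).1 (σ p).2.1 (σ p).2.2.1 (σ p).2.2.2) :
    ∑ a, ∑ b, ∑ c, ∑ d, f a b c d = ∑ a, ∑ b, ∑ c, ∑ d, g a b c d := by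
  have e1 : ∑ p : α×α×α×α, f p.1 p.2.1 p.2.2.1 p.2.2.2 = ∑ a, ∑ b, ∑ c, ∑ d, f a b c d := by
    simp [Fintype.sum_prod_type]
  have e2 : ∑ p : α×α×α×α, g p.1 p.2.1 p.2.2.1 p.2.2.2 = ∑ a, ∑ b, ∑ c, ∑ d, g a b c d := by
    simp [Fintype.sum_prod_type]
  rw [← e1, ← e2]
  exact Fintype.sum_bijective σ σ.bijective _ _ h

lemma hexp {n : ℕ} (μ : (Fin n → ℝ) → (Fin n → ℝ) → (Fin n → ℝ))
    (h1 : ∀ x, IsLinearMap ℝ (μ x)) (h2 : ∀ y, IsLinearMap ℝ (fun x => μ x y))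
    (x y : Fin n → ℝ) (k : Fin n) :
    μ x y k = ∑ l, ∑ m, x l * y m * cc μ l m k := by
  have hbasis : ∀ z : Fin n → ℝ, ∑ l, z l • (Pi.single l (1:ℝ) : Fin n → ℝ) = z := by
    intro z; funext j; simp [Pi.single_apply, Finset.sum_apply]
  have e1 : μ x y = ∑ l, x l • μ (Pi.single l 1) y := by
    let L := IsLinearMap.mk' (fun x => μ x y) (h2 y)
    have : ∀ z, μ z y = L z := fun z => rfl
    rw [this, ← hbasis x, map_sum]
    simp [L, Pi.single_apply, mul_ite, mul_one, mul_zero, Finset.sum_ite_eq, Finset.sum_ite_eq']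
  have e2 : ∀ l, μ (Pi.single l 1) y = ∑ m, y m • μ (Pi.single l 1) (Pi.single m 1) := by
    intro l
    let L := IsLinearMap.mk' (μ (Pi.single l 1)) (h1 _)
    have : ∀ z, μ (Pi.single l 1) z = L z := fun z => rfl
    rw [this, ← hbasis y, map_sum]
    simp [L, Pi.single_apply, mul_ite, mul_one, mul_zero, Finset.sum_ite_eq, Finset.sum_ite_eq']
  rw [e1]
  simp only [e2, Finset.sum_apply, Pi.smul_apply, smul_eq_mul, Finset.mul_sum]
  refine Finset.sum_congr rfl fun l _ => Finset.sum_congr rfl fun m _ => ?_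
  rw [cc]; ring

lemma emv1 {n : ℕ} (μ : (Fin n → ℝ) → (Fin n → ℝ) → (Fin n → ℝ))
    (h1 : ∀ x, IsLinearMap ℝ (μ x)) (h2 : ∀ y, IsLinearMap ℝ (fun x => μ x y))
    (A : Matrix (Fin n) (Fin n) ℝ) (i j k : Fin n) :
    μ (A.mulVec (Pi.single i 1)) (Pi.single j 1) k = ∑ l, A l i * cc μ l j k := by
  rw [hexp μ h1 h2]
  have hmv : ∀ a, A.mulVec (Pi.single i 1) a = A a i := by
    intro a; simp [Matrix.mulVec, dotProduct, Pi.single_apply]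
  simp [hmv, Pi.single_apply, mul_ite, ite_mul, mul_one, mul_zero, zero_mul,
    Finset.sum_ite_eq, Finset.sum_ite_eq']

lemma emv2 {n : ℕ} (μ : (Fin n → ℝ) → (Fin n → ℝ) → (Fin n → ℝ))
    (h1 : ∀ x, IsLinearMap ℝ (μ x)) (h2 : ∀ y, IsLinearMap ℝ (fun x => μ x y))
    (A : Matrix (Fin n) (Fin n) ℝ) (i j k : Fin n) :
    μ (Pi.single i 1) (A.mulVec (Pi.single j 1)) k = ∑ l, A l j * cc μ i l k := by
  rw [hexp μ h1 h2]
  have hmv : ∀ a, A.mulVec (Pi.single j 1) a = A a j := by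
    intro a; simp [Matrix.mulVec, dotProduct, Pi.single_apply]
  simp [hmv, Pi.single_apply, mul_ite, ite_mul, mul_one, mul_zero, zero_mul,
    Finset.sum_ite_eq, Finset.sum_ite_eq']

lemma emv3 {n : ℕ} (μ : (Fin n → ℝ) → (Fin n → ℝ) → (Fin n → ℝ))
    (A : Matrix (Fin n) (Fin n) ℝ) (i j k : Fin n) :
    A.mulVec (μ (Pi.single i 1) (Pi.single j 1)) k = ∑ l, A k l * cc μ i j l := by
  simp [Matrix.mulVec, dotProduct, cc]

lemma had {n : ℕ} (μ : (Fin n → ℝ) → (Fin n → ℝ) → (Fin n → ℝ)) (i a b : Fin n) :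
    adMat μ (Pi.single i 1) a b = cc μ i b a := rfl

lemma hLtrace {n : ℕ} (μ : (Fin n → ℝ) → (Fin n → ℝ) → (Fin n → ℝ))
    (A : Matrix (Fin n) (Fin n) ℝ) :
    (Ric μ * A).trace =
      -(1/2) * (∑ p, ∑ r, ∑ j, ∑ q, cc μ j p q * cc μ j r q * A r p)
      + (1/4) * (∑ p, ∑ r, ∑ j, ∑ q, cc μ j q p * cc μ j q r * A r p) := by
  simp only [Ric, Matrix.trace, Matrix.mul_apply, Matrix.add_apply, Matrix.smul_apply,
    Matrix.sum_apply, Matrix.transpose_apply, Matrix.diag_apply, smul_eq_mul,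
    Finset.sum_mul, Finset.mul_sum, add_mul, neg_mul, had]
  rw [Finset.sum_add_distrib]
  congr 1 <;>
  · refine Finset.sum_congr rfl fun p _ => Finset.sum_congr rfl fun r _ =>
      Finset.sum_congr rfl fun j _ => Finset.sum_congr rfl fun q _ => ?_
    ring

lemma hRinn {n : ℕ} (μ : (Fin n → ℝ) → (Fin n → ℝ) → (Fin n → ℝ))
    (h1 : ∀ x, IsLinearMap ℝ (μ x)) (h2 : ∀ y, IsLinearMap ℝ (fun x => μ x y))
    (A : Matrix (Fin n) (Fin n) ℝ) :
    innV (deltaMap μ A) μ =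
      (∑ i, ∑ j, ∑ k, ∑ l, A l i * cc μ l j k * cc μ i j k)
      + (∑ i, ∑ j, ∑ k, ∑ l, A l j * cc μ i l k * cc μ i j k)
      - (∑ i, ∑ j, ∑ k, ∑ l, A k l * cc μ i j l * cc μ i j k) := by
  rw [innV]
  rw [← Finset.sum_add_distrib, ← Finset.sum_sub_distrib]
  refine Finset.sum_congr rfl fun i _ => ?_
  rw [← Finset.sum_add_distrib, ← Finset.sum_sub_distrib]
  refine Finset.sum_congr rfl fun j _ => ?_
  rw [← Finset.sum_add_distrib, ← Finset.sum_sub_distrib]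
  refine Finset.sum_congr rfl fun k _ => ?_
  simp only [deltaMap, Pi.add_apply, Pi.sub_apply, emv1 μ h1 h2, emv2 μ h1 h2, emv3 μ,
    Finset.sum_mul]
  show _ * cc μ i j k = _
  rw [sub_mul, add_mul, Finset.sum_mul, Finset.sum_mul, Finset.sum_mul]

/-- `tr(Ric_μ α) = -¼ ⟨δ_μ(α), μ⟩` for all `α`. -/
theorem stmt4 {n : ℕ} (μ : (Fin n → ℝ) → (Fin n → ℝ) → (Fin n → ℝ))
    (hμ : IsSkewBil μ) (A : Matrix (Fin n) (Fin n) ℝ) :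
    (Ric μ * A).trace = -(1/4 : ℝ) * innV (deltaMap μ A) μ := by
  obtain ⟨h1, h2, hsk⟩ := hμ
  have hskew : ∀ i j k : Fin n, cc μ i j k = - cc μ j i k := by
    intro i j k
    have := congrFun (hsk (Pi.single i 1) (Pi.single j 1)) k
    simpa [cc] using this
  rw [hLtrace, hRinn μ h1 h2]
  have hU1 : (∑ p, ∑ r, ∑ j, ∑ q, cc μ j p q * cc μ j r q * A r p)
      = ∑ i, ∑ j, ∑ k, ∑ l, A l i * cc μ l j k * cc μ i j k := by
    refine sum4_equiv _ _ ⟨fun p => (p.1, p.2.2.1, p.2.2.2, p.2.1),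
      fun p => (p.1, p.2.2.2, p.2.1, p.2.2.1), fun ⟨a,b,c,d⟩ => rfl, fun ⟨a,b,c,d⟩ => rfl⟩ ?_
    rintro ⟨p, r, s, q⟩
    dsimp only [Equiv.coe_fn_mk]
    rw [hskew s p, hskew s r]; ring
  have hU2 : (∑ p, ∑ r, ∑ j, ∑ q, cc μ j q p * cc μ j q r * A r p)
      = ∑ i, ∑ j, ∑ k, ∑ l, A k l * cc μ i j l * cc μ i j k := by
    refine sum4_equiv _ _ ⟨fun p => (p.2.2.1, p.2.2.2, p.2.1, p.1),
      fun q => (q.2.2.2, q.2.2.1, q.1, q.2.1), fun ⟨a,b,c,d⟩ => rfl, fun ⟨a,b,c,d⟩ => rfl⟩ ?_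
    rintro ⟨p, r, s, q⟩
    dsimp only [Equiv.coe_fn_mk]
    ring
  have hS2 : (∑ i, ∑ j, ∑ k, ∑ l, A l j * cc μ i l k * cc μ i j k)
      = ∑ i, ∑ j, ∑ k, ∑ l, A l i * cc μ l j k * cc μ i j k := by
    refine sum4_equiv _ _ ⟨fun p => (p.2.1, p.1, p.2.2.1, p.2.2.2),
      fun p => (p.2.1, p.1, p.2.2.1, p.2.2.2), fun ⟨a,b,c,d⟩ => rfl, fun ⟨a,b,c,d⟩ => rfl⟩ ?_
    rintro ⟨i, j, k, l⟩
    dsimp only [Equiv.coe_fn_mk]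
    rw [hskew i l, hskew i j]; ring
  rw [hU1, hU2, hS2]
  ring
end
end

section
/- For any μ ∈ V_n and any derivation D of (ℝⁿ, μ), one has tr(Ric_μ D) = 0. -/
open Matrix BigOperators

noncomputable section

lemma single_eq_smul {n : ℕ} (i : Fin n) (a : ℝ) :
    Pi.single i a = a • (Pi.single i (1:ℝ) : Fin n → ℝ) := by
  ext j
  by_cases h : j = i <;> simp [Pi.single_apply, h]

lemma expand {n : ℕ} {μ : (Fin n → ℝ) → (Fin n → ℝ) → (Fin n → ℝ)}
    (hμ : IsSkewBil μ) (x y : Fin n → ℝ) :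
    μ x y = ∑ i, ∑ j, (x i * y j) • μ (Pi.single i 1) (Pi.single j 1) := by
  have h1 : ∀ z, μ x z = ∑ j, (z j) • μ x (Pi.single j 1) := by
    intro z
    conv_lhs => rw [← Finset.univ_sum_single z]
    rw [show μ x (∑ j, Pi.single j (z j)) = ∑ j, μ x (Pi.single j (z j)) from
      map_sum (IsLinearMap.mk' _ (hμ.1 x)) _ _]
    refine Finset.sum_congr rfl fun j _ => ?_
    rw [single_eq_smul, (hμ.1 x).map_smul]
  have h2 : ∀ j, μ x (Pi.single j 1) = ∑ i, (x i) • μ (Pi.single i 1) (Pi.single j 1) := by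
    intro j
    conv_lhs => rw [← Finset.univ_sum_single x]
    rw [show μ (∑ i, Pi.single i (x i)) (Pi.single j 1)
        = ∑ i, μ (Pi.single i (x i)) (Pi.single j 1) from
      map_sum (IsLinearMap.mk' _ (hμ.2.1 (Pi.single j 1))) _ _]
    refine Finset.sum_congr rfl fun i _ => ?_
    rw [single_eq_smul]
    exact (hμ.2.1 (Pi.single j 1)).map_smul _ _
  have h3 : μ x y = ∑ j, ∑ i, (x i * y j) • μ (Pi.single i 1) (Pi.single j 1) := by
    rw [h1]
    refine Finset.sum_congr rfl fun j _ => ?_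
    rw [h2, Finset.smul_sum]
    refine Finset.sum_congr rfl fun i _ => ?_
    rw [smul_smul, mul_comm]
  rw [h3, Finset.sum_comm]

lemma expandc {n : ℕ} {μ : (Fin n → ℝ) → (Fin n → ℝ) → (Fin n → ℝ)}
    (hμ : IsSkewBil μ) (x y : Fin n → ℝ) (k : Fin n) :
    μ x y k = ∑ i, ∑ j, x i * y j * cc μ i j k := by
  have := congrFun (expand hμ x y) k
  simpa [cc, Finset.sum_apply] using this

lemma skewc {n : ℕ} {μ : (Fin n → ℝ) → (Fin n → ℝ) → (Fin n → ℝ)}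
    (hμ : IsSkewBil μ) (i j k : Fin n) : cc μ i j k = - cc μ j i k := by
  have := congrFun (hμ.2.2 (Pi.single i 1) (Pi.single j 1)) k
  simpa [cc] using this

lemma derivc {n : ℕ} {μ : (Fin n → ℝ) → (Fin n → ℝ) → (Fin n → ℝ)}
    (hμ : IsSkewBil μ) {D : Matrix (Fin n) (Fin n) ℝ} (hD : IsDeriv μ D)
    (i j p : Fin n) :
    ∑ k, D p k * cc μ i j k
      = (∑ q, D q i * cc μ q j p) + ∑ q, D q j * cc μ i q p := by
  have h := congrFun (hD (Pi.single i 1) (Pi.single j 1)) p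
  have hL : D.mulVec (μ (Pi.single i 1) (Pi.single j 1)) p = ∑ k, D p k * cc μ i j k := by
    simp [Matrix.mulVec, dotProduct, cc]
  have hR1 : μ (D.mulVec (Pi.single i 1)) (Pi.single j 1) p = ∑ q, D q i * cc μ q j p := by
    rw [expandc hμ]
    simp [Matrix.mulVec_single, Pi.single_apply]
  have hR2 : μ (Pi.single i 1) (D.mulVec (Pi.single j 1)) p = ∑ q, D q j * cc μ i q p := by
    rw [expandc hμ]
    simp [Matrix.mulVec_single, Pi.single_apply, mul_comm]
  rw [hL, Pi.add_apply, hR1, hR2] at h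
  simpa using h

/-- Move the outermost of four sums to the innermost position. -/
lemma rot4 {n : ℕ} (f : Fin n → Fin n → Fin n → Fin n → ℝ) :
    ∑ a, ∑ b, ∑ c, ∑ d, f a b c d = ∑ b, ∑ c, ∑ d, ∑ a, f a b c d := by
  rw [Finset.sum_comm]
  refine Finset.sum_congr rfl fun b _ => ?_
  rw [Finset.sum_comm]
  refine Finset.sum_congr rfl fun c _ => ?_
  exact Finset.sum_comm

/-- Swap the second and third of four sums. -/
lemma s23 {n : ℕ} (f : Fin n → Fin n → Fin n → Fin n → ℝ) :
    ∑ a, ∑ b, ∑ c, ∑ d, f a b c d = ∑ a, ∑ c, ∑ b, ∑ d, f a b c d :=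
  Finset.sum_congr rfl fun _ _ => Finset.sum_comm

/-- `tr(Ric_μ D) = 0` for every derivation `D` of `(ℝⁿ,μ)`. -/
theorem stmt5 {n : ℕ} (μ : (Fin n → ℝ) → (Fin n → ℝ) → (Fin n → ℝ))
    (hμ : IsSkewBil μ) (D : Matrix (Fin n) (Fin n) ℝ) (hD : IsDeriv μ D) :
    (Ric μ * D).trace = 0 := by
  have hT : (Ric μ * D).trace
      = (-(1/2:ℝ)) * (∑ p, ∑ q, ∑ i, ∑ k, D q p * (cc μ i p k * cc μ i q k))
        + (1/4:ℝ) * (∑ p, ∑ q, ∑ i, ∑ k, D q p * (cc μ i k p * cc μ i k q)) := by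
    simp only [Matrix.trace, Matrix.diag, Matrix.mul_apply, Ric, Matrix.add_apply,
      Matrix.smul_apply, Matrix.sum_apply, Matrix.transpose_apply, adMat, cc,
      smul_eq_mul, Finset.mul_sum, Finset.sum_mul, add_mul, Finset.sum_add_distrib]
    congr 1 <;>
    · refine Finset.sum_congr rfl fun _ _ => Finset.sum_congr rfl fun _ _ =>
        Finset.sum_congr rfl fun _ _ => Finset.sum_congr rfl fun _ _ => ?_
      ring
  have hsplit : (∑ p, ∑ q, ∑ i, ∑ k, D q p * (cc μ i k p * cc μ i k q))
      = (∑ q, ∑ i, ∑ k, ∑ r, D r i * cc μ r k q * cc μ i k q)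
        + ∑ q, ∑ i, ∑ k, ∑ r, D r k * cc μ i r q * cc μ i k q := by
    rw [rot4 (fun p q i k => D q p * (cc μ i k p * cc μ i k q))]
    have : ∀ q i k : Fin n,
        (∑ p, D q p * (cc μ i k p * cc μ i k q))
          = (∑ r, D r i * cc μ r k q * cc μ i k q)
            + ∑ r, D r k * cc μ i r q * cc μ i k q := by
      intro q i k
      have h1 : (∑ p, D q p * (cc μ i k p * cc μ i k q))
          = (∑ p, D q p * cc μ i k p) * cc μ i k q := by
        rw [Finset.sum_mul]
        exact Finset.sum_congr rfl fun p _ => by ring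
      rw [h1, derivc hμ hD i k q, add_mul, Finset.sum_mul, Finset.sum_mul]
    calc (∑ q, ∑ i, ∑ k, ∑ p, D q p * (cc μ i k p * cc μ i k q))
        = ∑ q, ∑ i, ∑ k, ((∑ r, D r i * cc μ r k q * cc μ i k q)
            + ∑ r, D r k * cc μ i r q * cc μ i k q) := by
          refine Finset.sum_congr rfl fun q _ => Finset.sum_congr rfl fun i _ =>
            Finset.sum_congr rfl fun k _ => this q i k
      _ = (∑ q, ∑ i, ∑ k, ∑ r, D r i * cc μ r k q * cc μ i k q)
            + ∑ q, ∑ i, ∑ k, ∑ r, D r k * cc μ i r q * cc μ i k q := by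
          simp [Finset.sum_add_distrib]
  have hBA : (∑ q, ∑ i, ∑ k, ∑ r, D r k * cc μ i r q * cc μ i k q)
      = ∑ q, ∑ i, ∑ k, ∑ r, D r i * cc μ r k q * cc μ i k q := by
    rw [s23 (fun q i k r => D r k * cc μ i r q * cc μ i k q)]
    refine Finset.sum_congr rfl fun q _ => Finset.sum_congr rfl fun k _ =>
      Finset.sum_congr rfl fun i _ => Finset.sum_congr rfl fun r _ => ?_
    rw [skewc hμ i r q, skewc hμ i k q]
    ring
  have hAT : (∑ q, ∑ i, ∑ k, ∑ r, D r i * cc μ r k q * cc μ i k q)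
      = ∑ p, ∑ q, ∑ i, ∑ k, D q p * (cc μ i p k * cc μ i q k) := by
    rw [rot4 (fun q i k r => D r i * cc μ r k q * cc μ i k q)]
    rw [s23 (fun i k r q => D r i * cc μ r k q * cc μ i k q)]
    refine Finset.sum_congr rfl fun i _ => Finset.sum_congr rfl fun r _ =>
      Finset.sum_congr rfl fun k _ => Finset.sum_congr rfl fun q _ => ?_
    rw [skewc hμ k i q, skewc hμ k r q]
    ring
  rw [hT, hsplit, hBA, hAT]
  ring
end
end

section
/- Let μ ∈ V_n and suppose Ric_μ is a derivation of (ℝⁿ,μ). Then Ric_μ = 0, and consequently μ = 0. -/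
open Matrix BigOperators

noncomputable section

namespace Stmt6Aux

variable {n : ℕ}

/-- structure constants -/
def c (μ : (Fin n → ℝ) → (Fin n → ℝ) → (Fin n → ℝ)) (i j k : Fin n) : ℝ :=
  μ (Pi.single i 1) (Pi.single j 1) k

lemma skew {μ} (hμ : IsSkewBil (n := n) μ) (i j k : Fin n) : c μ i j k = - c μ j i k := by
  unfold c; rw [hμ.2.2]; rfl

lemma basis_expand (x : Fin n → ℝ) : x = ∑ i, x i • (Pi.single i 1 : Fin n → ℝ) := by
  conv_lhs => rw [← Finset.univ_sum_single x]
  refine Finset.sum_congr rfl fun i _ => ?_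
  ext j; simp [Pi.single_apply]

lemma expand_left {μ} (hμ : IsSkewBil (n := n) μ) (x y : Fin n → ℝ) :
    μ x y = ∑ i, x i • μ (Pi.single i 1) y := by
  have hL := hμ.2.1 y
  let f : (Fin n → ℝ) →ₗ[ℝ] (Fin n → ℝ) := IsLinearMap.mk' _ hL
  have hfx : ∀ z, μ z y = f z := fun z => rfl
  have key : μ (∑ i, x i • (Pi.single i 1 : Fin n → ℝ)) y = ∑ i, x i • μ (Pi.single i 1) y := by
    rw [hfx, map_sum]; simp only [_root_.map_smul]; rfl
  rw [← key, ← basis_expand x]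

lemma expand_right {μ} (hμ : IsSkewBil (n := n) μ) (x y : Fin n → ℝ) :
    μ x y = ∑ j, y j • μ x (Pi.single j 1) := by
  have hL := hμ.1 x
  let f : (Fin n → ℝ) →ₗ[ℝ] (Fin n → ℝ) := IsLinearMap.mk' _ hL
  have hfx : ∀ z, μ x z = f z := fun z => rfl
  have key : μ x (∑ j, y j • (Pi.single j 1 : Fin n → ℝ)) = ∑ j, y j • μ x (Pi.single j 1) := by
    rw [hfx, map_sum]; simp only [_root_.map_smul]; rfl
  rw [← key, ← basis_expand y]

lemma mulVec_single' (D : Matrix (Fin n) (Fin n) ℝ) (j a : Fin n) :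
    D.mulVec (Pi.single j 1) a = D a j := by
  simp [Matrix.mulVec, dotProduct, Pi.single_apply]

/-- The second-slot contraction `M`. -/
def MM (μ : (Fin n → ℝ) → (Fin n → ℝ) → (Fin n → ℝ)) (a b : Fin n) : ℝ :=
  ∑ i, ∑ k, c μ i k a * c μ i k b

/-- The contraction `N`. -/
def NN (μ : (Fin n → ℝ) → (Fin n → ℝ) → (Fin n → ℝ)) (a b : Fin n) : ℝ :=
  ∑ i, ∑ k, c μ i a k * c μ i b k

lemma ric_apply (μ : (Fin n → ℝ) → (Fin n → ℝ) → (Fin n → ℝ)) (a b : Fin n) :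
    Ric μ a b = -(1/2) * NN μ a b + (1/4) * MM μ a b := by
  simp only [Ric, Matrix.add_apply, Matrix.smul_apply, Matrix.sum_apply,
    Matrix.mul_apply, Matrix.transpose_apply, smul_eq_mul, NN, MM, c, adMat,
    Finset.mul_sum]

lemma sum4_swap (F : Fin n → Fin n → Fin n → Fin n → ℝ) :
    ∑ j, ∑ k, ∑ a, ∑ l, F j k a l = ∑ a, ∑ l, ∑ j, ∑ k, F j k a l := by
  rw [show (∑ j, ∑ k, ∑ a, ∑ l, F j k a l) = ∑ j, ∑ a, ∑ k, ∑ l, F j k a l from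
    Finset.sum_congr rfl fun j _ => Finset.sum_comm, Finset.sum_comm]
  refine Finset.sum_congr rfl fun a _ => ?_
  rw [show (∑ j, ∑ k, ∑ l, F j k a l) = ∑ j, ∑ l, ∑ k, F j k a l from
    Finset.sum_congr rfl fun j _ => Finset.sum_comm, Finset.sum_comm]

lemma sum_rot4 (F : Fin n → Fin n → Fin n → Fin n → ℝ) :
    ∑ a, ∑ l, ∑ j, ∑ k, F a l j k = ∑ l, ∑ j, ∑ k, ∑ a, F a l j k := by
  rw [Finset.sum_comm]
  refine Finset.sum_congr rfl fun l _ => ?_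
  rw [Finset.sum_comm]
  refine Finset.sum_congr rfl fun j _ => ?_
  rw [Finset.sum_comm]

lemma sum_rot3 (F : Fin n → Fin n → Fin n → ℝ) :
    ∑ a, ∑ i, ∑ k, F a i k = ∑ i, ∑ k, ∑ a, F a i k := by
  rw [Finset.sum_comm]
  exact Finset.sum_congr rfl fun i _ => Finset.sum_comm

lemma deriv_coord {μ} (hμ : IsSkewBil (n := n) μ) (h : IsDeriv μ (Ric μ)) (j k a : Fin n) :
    ∑ l, Ric μ a l * c μ j k l
      = (∑ l, Ric μ l j * c μ l k a) + (∑ l, Ric μ l k * c μ j l a) := by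
  have h1 := congrFun (h (Pi.single j 1) (Pi.single k 1)) a
  have p1 : ((Ric μ).mulVec (μ (Pi.single j 1) (Pi.single k 1))) a
      = ∑ l, Ric μ a l * c μ j k l := rfl
  have p2 : μ ((Ric μ).mulVec (Pi.single j 1)) (Pi.single k 1) a
      = ∑ l, Ric μ l j * c μ l k a := by
    rw [expand_left hμ]
    simp [Finset.sum_apply, mulVec_single', c]
  have p3 : μ (Pi.single j 1) ((Ric μ).mulVec (Pi.single k 1)) a
      = ∑ l, Ric μ l k * c μ j l a := by
    rw [expand_right hμ]
    simp [Finset.sum_apply, mulVec_single', c]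
  simp only [Pi.add_apply] at h1
  rw [p1, p2, p3] at h1
  exact h1

end Stmt6Aux

open Stmt6Aux in
/-- if `Ric_μ` is a derivation of `(ℝⁿ,μ)` then `Ric_μ = 0` and `μ = 0`. -/
theorem stmt6 {n : ℕ} (μ : (Fin n → ℝ) → (Fin n → ℝ) → (Fin n → ℝ))
    (hμ : IsSkewBil μ) (h : IsDeriv μ (Ric μ)) :
    Ric μ = 0 ∧ μ = (fun _ _ => 0) := by
  -- summed derivation identity
  have Tsum : ∑ j, ∑ k, ∑ a, (∑ l, Ric μ a l * c μ j k l) * c μ j k a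
      = (∑ j, ∑ k, ∑ a, (∑ l, Ric μ l j * c μ l k a) * c μ j k a)
        + (∑ j, ∑ k, ∑ a, (∑ l, Ric μ l k * c μ j l a) * c μ j k a) := by
    rw [← Finset.sum_add_distrib]
    refine Finset.sum_congr rfl fun j _ => ?_
    rw [← Finset.sum_add_distrib]
    refine Finset.sum_congr rfl fun k _ => ?_
    rw [← Finset.sum_add_distrib]
    refine Finset.sum_congr rfl fun a _ => ?_
    rw [deriv_coord hμ h j k a, add_mul]
  have hL : (∑ j, ∑ k, ∑ a, (∑ l, Ric μ a l * c μ j k l) * c μ j k a)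
      = ∑ a, ∑ b, Ric μ a b * MM μ a b := by
    simp only [Finset.sum_mul]
    rw [sum4_swap]
    simp only [MM, Finset.mul_sum]
    refine Finset.sum_congr rfl fun a _ => Finset.sum_congr rfl fun l _ =>
      Finset.sum_congr rfl fun j _ => Finset.sum_congr rfl fun k _ => by ring
  have hT1 : (∑ j, ∑ k, ∑ a, (∑ l, Ric μ l j * c μ l k a) * c μ j k a)
      = ∑ a, ∑ b, Ric μ a b * NN μ a b := by
    simp only [Finset.sum_mul]
    rw [sum4_swap, sum_rot4]
    simp only [NN, Finset.mul_sum]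
    refine Finset.sum_congr rfl fun l _ => Finset.sum_congr rfl fun j _ =>
      Finset.sum_congr rfl fun k _ => Finset.sum_congr rfl fun a _ => ?_
    rw [skew hμ l k a, skew hμ j k a]
    ring
  have hT2 : (∑ j, ∑ k, ∑ a, (∑ l, Ric μ l k * c μ j l a) * c μ j k a)
      = ∑ a, ∑ b, Ric μ a b * NN μ a b := by
    simp only [Finset.sum_mul]
    rw [sum4_swap, sum_rot4]
    rw [show (∑ l, ∑ j, ∑ k, ∑ a, Ric μ l k * c μ j l a * c μ j k a)
        = ∑ l, ∑ k, ∑ j, ∑ a, Ric μ l k * c μ j l a * c μ j k a from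
      Finset.sum_congr rfl fun l _ => Finset.sum_comm]
    simp only [NN, Finset.mul_sum]
    refine Finset.sum_congr rfl fun l _ => Finset.sum_congr rfl fun k _ =>
      Finset.sum_congr rfl fun j _ => Finset.sum_congr rfl fun a _ => by ring
  have key : (∑ a, ∑ b, Ric μ a b * MM μ a b)
      = 2 * ∑ a, ∑ b, Ric μ a b * NN μ a b := by
    rw [← hL, Tsum, hT1, hT2]; ring
  have hsq : (∑ a, ∑ b, (Ric μ a b) ^ 2)
      = -(1/2) * (∑ a, ∑ b, Ric μ a b * NN μ a b)
        + (1/4) * (∑ a, ∑ b, Ric μ a b * MM μ a b) := by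
    rw [Finset.mul_sum, Finset.mul_sum, ← Finset.sum_add_distrib]
    refine Finset.sum_congr rfl fun a _ => ?_
    rw [Finset.mul_sum, Finset.mul_sum, ← Finset.sum_add_distrib]
    refine Finset.sum_congr rfl fun b _ => ?_
    have hr := ric_apply μ a b
    calc (Ric μ a b) ^ 2 = Ric μ a b * (-(1/2) * NN μ a b + (1/4) * MM μ a b) := by
          rw [← hr]; ring
      _ = -(1/2) * (Ric μ a b * NN μ a b) + (1/4) * (Ric μ a b * MM μ a b) := by ring
  have h0 : (∑ a, ∑ b, (Ric μ a b) ^ 2) = 0 := by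
    rw [hsq, key]; ring
  have hz : ∀ a b, Ric μ a b = 0 := by
    intro a b
    have h1 := (Finset.sum_eq_zero_iff_of_nonneg
      (fun a _ => Finset.sum_nonneg fun b _ => sq_nonneg _)).mp h0 a (Finset.mem_univ a)
    have h2 := (Finset.sum_eq_zero_iff_of_nonneg
      (fun b _ => sq_nonneg _)).mp h1 b (Finset.mem_univ b)
    exact pow_eq_zero_iff (two_ne_zero) |>.mp h2
  have hRic : Ric μ = 0 := by
    ext a b; exact hz a b
  refine ⟨hRic, ?_⟩
  -- trace argument
  have htr : (0 : ℝ) = -(1/4) * ∑ i, ∑ j, ∑ k, (c μ i j k) ^ 2 := by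
    have t1 : (∑ a, Ric μ a a) = 0 := Finset.sum_eq_zero fun a _ => hz a a
    have t2 : (∑ a, Ric μ a a)
        = -(1/2) * (∑ a, NN μ a a) + (1/4) * (∑ a, MM μ a a) := by
      rw [Finset.mul_sum, Finset.mul_sum, ← Finset.sum_add_distrib]
      exact Finset.sum_congr rfl fun a _ => ric_apply μ a a
    have t3 : (∑ a, NN μ a a) = ∑ i, ∑ j, ∑ k, (c μ i j k) ^ 2 := by
      simp only [NN]
      rw [Finset.sum_comm]
      exact Finset.sum_congr rfl fun i _ => Finset.sum_congr rfl fun j _ =>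
        Finset.sum_congr rfl fun k _ => (sq _).symm
    have t4 : (∑ a, MM μ a a) = ∑ i, ∑ j, ∑ k, (c μ i j k) ^ 2 := by
      simp only [MM]
      rw [sum_rot3 (fun a i k => c μ i k a * c μ i k a)]
      exact Finset.sum_congr rfl fun i _ => Finset.sum_congr rfl fun j _ =>
        Finset.sum_congr rfl fun k _ => (sq _).symm
    rw [← t1, t2, t3, t4]; ring
  have hcz : ∀ i j k, c μ i j k = 0 := by
    intro i j k
    have hQ : (∑ i, ∑ j, ∑ k, (c μ i j k) ^ 2) = 0 := by linarith [htr]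
    have h1 := (Finset.sum_eq_zero_iff_of_nonneg
      (fun i _ => Finset.sum_nonneg fun j _ => Finset.sum_nonneg fun k _ => sq_nonneg _)).mp
      hQ i (Finset.mem_univ i)
    have h2 := (Finset.sum_eq_zero_iff_of_nonneg
      (fun j _ => Finset.sum_nonneg fun k _ => sq_nonneg _)).mp h1 j (Finset.mem_univ j)
    have h3 := (Finset.sum_eq_zero_iff_of_nonneg
      (fun k _ => sq_nonneg _)).mp h2 k (Finset.mem_univ k)
    exact pow_eq_zero_iff (two_ne_zero) |>.mp h3
  have hbase : ∀ i j, μ (Pi.single i 1) (Pi.single j 1) = 0 :=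
    fun i j => funext fun k => hcz i j k
  funext x y
  rw [expand_left hμ x y]
  have hiz : ∀ i, μ (Pi.single i 1) y = 0 := by
    intro i
    rw [expand_right hμ]
    exact Finset.sum_eq_zero fun j _ => by rw [hbase]; simp
  simp [hiz]
end
end

section
/- If μ is a nonzero nilpotent Lie bracket on ℝⁿ, then the Ricci form ric_μ(x,y) = ⟨Ric_μ x, y⟩ has both a positive direction and a negative direction: there exist x, y ∈ ℝⁿ with ric_μ(x,x) < 0 and ric_μ(y,y) > 0. -/
open Matrix BigOperators

noncomputable section

lemma my_pi_decomp {n : ℕ} (y : Fin n → ℝ) :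
    y = ∑ j, y j • (Pi.single j 1 : Fin n → ℝ) := by
  funext i
  simp [Finset.sum_apply, Pi.single_apply]

lemma my_adMat_mulVec {n : ℕ} {μ : (Fin n → ℝ) → (Fin n → ℝ) → (Fin n → ℝ)}
    (h : ∀ x, IsLinearMap ℝ (μ x)) (x y : Fin n → ℝ) :
    (adMat μ x).mulVec y = μ x y := by
  have hmu : μ x y = ∑ j, y j • μ x (Pi.single j 1) := by
    let f := IsLinearMap.mk' (μ x) (h x)
    have : μ x y = f y := rfl
    rw [this]
    conv_lhs => rw [my_pi_decomp y]
    rw [map_sum]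
    simp [f]
  funext i
  rw [hmu]
  simp [Matrix.mulVec, dotProduct, adMat, Finset.sum_apply]
  exact Finset.sum_congr rfl fun j _ => mul_comm _ _

lemma my_mu_expand {n : ℕ} {μ : (Fin n → ℝ) → (Fin n → ℝ) → (Fin n → ℝ)}
    (h1 : ∀ y, IsLinearMap ℝ (fun x => μ x y)) (h2 : ∀ x, IsLinearMap ℝ (μ x))
    (x y : Fin n → ℝ) :
    μ x y = ∑ i, ∑ j, (x i * y j) • μ (Pi.single i 1) (Pi.single j 1) := by
  let g := IsLinearMap.mk' (fun x => μ x y) (h1 y)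
  have hg : μ x y = g x := rfl
  rw [hg]
  conv_lhs => rw [my_pi_decomp x]
  rw [map_sum]
  refine Finset.sum_congr rfl fun i _ => ?_
  have : g (x i • (Pi.single i 1 : Fin n → ℝ)) = x i • μ (Pi.single i 1) y := by
    rw [LinearMap.map_smul]; rfl
  rw [this]
  let f := IsLinearMap.mk' (μ (Pi.single i 1)) (h2 _)
  have hf : μ (Pi.single i 1) y = f y := rfl
  rw [hf]
  conv_lhs => rw [my_pi_decomp y]
  rw [map_sum, Finset.smul_sum]
  refine Finset.sum_congr rfl fun j _ => ?_
  rw [LinearMap.map_smul]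
  show x i • (y j • μ _ _) = _
  rw [smul_smul]


lemma my_sum_mulVec {n m : ℕ} (f : Fin m → Matrix (Fin n) (Fin n) ℝ) (x : Fin n → ℝ) :
    (∑ i, f i).mulVec x = ∑ i, (f i).mulVec x := by
  funext k
  simp [Matrix.mulVec, dotProduct, Finset.sum_apply, Matrix.sum_apply, Finset.sum_mul]
  rw [Finset.sum_comm]

lemma my_dot_transpose {n : ℕ} (A : Matrix (Fin n) (Fin n) ℝ) (u x : Fin n → ℝ) :
    ∑ k, (Aᵀ.mulVec u) k * x k = ∑ l, u l * (A.mulVec x) l := by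
  simp only [Matrix.mulVec, dotProduct, Matrix.transpose_apply, Finset.sum_mul,
    Finset.mul_sum]
  rw [Finset.sum_comm]
  exact Finset.sum_congr rfl fun l _ => Finset.sum_congr rfl fun k _ => by ring

lemma my_quad_AtA {n : ℕ} (A : Matrix (Fin n) (Fin n) ℝ) (x : Fin n → ℝ) :
    ∑ k, ((Aᵀ * A).mulVec x) k * x k = ∑ l, (A.mulVec x l) ^ 2 := by
  rw [← Matrix.mulVec_mulVec, my_dot_transpose]
  exact Finset.sum_congr rfl fun l _ => by ring

lemma my_quad_AAt {n : ℕ} (A : Matrix (Fin n) (Fin n) ℝ) (x : Fin n → ℝ) :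
    ∑ k, ((A * Aᵀ).mulVec x) k * x k = ∑ l, (Aᵀ.mulVec x l) ^ 2 := by
  have := my_quad_AtA Aᵀ x
  rwa [Matrix.transpose_transpose] at this

lemma my_ric_quad {n : ℕ} (μ : (Fin n → ℝ) → (Fin n → ℝ) → (Fin n → ℝ)) (x : Fin n → ℝ) :
    ∑ k, ((Ric μ).mulVec x) k * x k
      = -(1/2) * (∑ i, ∑ l, ((adMat μ (Pi.single i 1)).mulVec x l) ^ 2)
        + (1/4) * (∑ i, ∑ l, (((adMat μ (Pi.single i 1))ᵀ).mulVec x l) ^ 2) := by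
  set S := ∑ i, (adMat μ (Pi.single i 1))ᵀ * adMat μ (Pi.single i 1) with hS
  set T := ∑ i, adMat μ (Pi.single i 1) * (adMat μ (Pi.single i 1))ᵀ with hT
  have h1 : ∀ k, ((Ric μ).mulVec x) k = -(1/2) * (S.mulVec x) k + (1/4) * (T.mulVec x) k := by
    intro k
    rw [Ric, Matrix.add_mulVec, Matrix.smul_mulVec, Matrix.smul_mulVec]
    simp [hS, hT]
  have h2 : ∑ k, ((Ric μ).mulVec x) k * x k
      = -(1/2) * (∑ k, (S.mulVec x) k * x k) + (1/4) * (∑ k, (T.mulVec x) k * x k) := by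
    rw [Finset.mul_sum, Finset.mul_sum, ← Finset.sum_add_distrib]
    exact Finset.sum_congr rfl fun k _ => by rw [h1]; ring
  rw [h2]
  have hSx : ∑ k, (S.mulVec x) k * x k
      = ∑ i, ∑ l, ((adMat μ (Pi.single i 1)).mulVec x l) ^ 2 := by
    rw [hS, my_sum_mulVec]
    simp only [Finset.sum_apply, Finset.sum_mul]
    rw [Finset.sum_comm]
    exact Finset.sum_congr rfl fun i _ => my_quad_AtA _ x
  have hTx : ∑ k, (T.mulVec x) k * x k
      = ∑ i, ∑ l, (((adMat μ (Pi.single i 1))ᵀ).mulVec x l) ^ 2 := by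
    rw [hT, my_sum_mulVec]
    simp only [Finset.sum_apply, Finset.sum_mul]
    rw [Finset.sum_comm]
    exact Finset.sum_congr rfl fun i _ => my_quad_AAt _ x
  rw [hSx, hTx]

class MyNilData (n : ℕ) : Type where
  mu : (Fin n → ℝ) → (Fin n → ℝ) → (Fin n → ℝ)
  lin2 : ∀ x, IsLinearMap ℝ (mu x)
  lin1 : ∀ y, IsLinearMap ℝ (fun x => mu x y)
  skew : ∀ x y, mu x y = - mu y x
  jac : ∀ x y z, mu x (mu y z) + mu y (mu z x) + mu z (mu x y) = 0

def MyL (n : ℕ) : Type := Fin n → ℝ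

def MyL.of {n : ℕ} (x : Fin n → ℝ) : MyL n := x

instance {n : ℕ} : AddCommGroup (MyL n) := inferInstanceAs (AddCommGroup (Fin n → ℝ))
instance {n : ℕ} : Module ℝ (MyL n) := inferInstanceAs (Module ℝ (Fin n → ℝ))
instance {n : ℕ} : IsNoetherian ℝ (MyL n) := inferInstanceAs (IsNoetherian ℝ (Fin n → ℝ))

instance {n : ℕ} [MyNilData n] : LieRing (MyL n) where
  bracket x y := MyNilData.mu x y
  add_lie x y z := (MyNilData.lin1 z).map_add x y
  lie_add x y z := (MyNilData.lin2 x).map_add y z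
  lie_self x := by
    show MyNilData.mu x x = (0 : Fin n → ℝ)
    have h := MyNilData.skew x x
    funext k
    have := congrFun h k
    simp only [Pi.neg_apply] at this
    show MyNilData.mu x x k = (0 : ℝ)
    linarith
  leibniz_lie x y z := by
    show MyNilData.mu x (MyNilData.mu y z)
      = MyNilData.mu (MyNilData.mu x y) z + MyNilData.mu y (MyNilData.mu x z)
    have j := MyNilData.jac x y z
    have s1 : MyNilData.mu z (MyNilData.mu x y) = - MyNilData.mu (MyNilData.mu x y) z :=
      MyNilData.skew _ _
    have s2 : MyNilData.mu y (MyNilData.mu z x) = - MyNilData.mu y (MyNilData.mu x z) := by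
      rw [MyNilData.skew z x]
      exact (MyNilData.lin2 y).map_neg _
    rw [s1, s2] at j
    funext k
    have := congrFun j k
    simp only [Pi.add_apply, Pi.neg_apply, Pi.zero_apply] at this
    show _ = (MyNilData.mu (MyNilData.mu x y) z + MyNilData.mu y (MyNilData.mu x z)) k
    simp only [Pi.add_apply]
    linarith

instance {n : ℕ} [MyNilData n] : LieAlgebra ℝ (MyL n) where
  lie_smul t x y := (MyNilData.lin2 x).map_smul t y

set_option maxHeartbeats 1000000 in
theorem my_exists_central {n : ℕ} [MyNilData n]
    (hnil : ∀ x : Fin n → ℝ, IsNilpotent (adMat (MyNilData.mu (n := n)) x))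
    (hne : ∃ x y : Fin n → ℝ, MyNilData.mu x y ≠ 0) :
    ∃ z : Fin n → ℝ, z ≠ 0 ∧ (∀ x, MyNilData.mu x z = 0) ∧
      z ∈ Submodule.span ℝ {w : Fin n → ℝ | ∃ x y, MyNilData.mu x y = w} := by
  classical
  set μ := MyNilData.mu (n := n) with hmu
  have hadnil : ∀ x : MyL n, IsNilpotent (LieAlgebra.ad ℝ (MyL n) x) := by
    intro x
    obtain ⟨m, hm⟩ := hnil x
    refine ⟨m, ?_⟩
    have hpow : ∀ (j : ℕ) (y : MyL n),
        ((LieAlgebra.ad ℝ (MyL n) x) ^ j) y = ((adMat μ x) ^ j).mulVec y := by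
      intro j
      induction j with
      | zero => intro y; exact (Matrix.one_mulVec (show Fin n → ℝ from y)).symm
      | succ j ih =>
        intro y
        rw [pow_succ', pow_succ']
        erw [← Matrix.mulVec_mulVec]
        have h1 : ((LieAlgebra.ad ℝ (MyL n) x) * ((LieAlgebra.ad ℝ (MyL n) x) ^ j)) y
            = (LieAlgebra.ad ℝ (MyL n) x) (((LieAlgebra.ad ℝ (MyL n) x) ^ j) y) := rfl
        rw [h1, ih]
        exact (my_adMat_mulVec MyNilData.lin2 x _).symm
    ext y
    rw [hpow m y, hm]
    show (0 : Matrix (Fin n) (Fin n) ℝ).mulVec y = _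
    erw [Matrix.zero_mulVec]
    rfl
  haveI hLnil : LieRing.IsNilpotent (MyL n) :=
    (LieAlgebra.isNilpotent_iff_forall (R := ℝ) (L := MyL n)).mpr hadnil
  obtain ⟨K, hK⟩ := LieModule.IsNilpotent.nilpotent ℝ (MyL n) (MyL n)
  set N : ℕ → LieSubmodule ℝ (MyL n) (MyL n) := LieModule.lowerCentralSeries ℝ (MyL n) (MyL n)
    with hN
  obtain ⟨a, b, hab⟩ := hne
  have hmem1 : MyL.of (μ a b) ∈ N 1 := by
    rw [hN, LieModule.lowerCentralSeries_succ]
    exact LieSubmodule.lie_mem_lie (LieSubmodule.mem_top (MyL.of a)) (LieSubmodule.mem_top (MyL.of b))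
  have h1ne : N 1 ≠ ⊥ := by
    intro h
    rw [LieSubmodule.eq_bot_iff] at h
    exact hab (h _ hmem1)
  have hex : ∃ k, N k = ⊥ := ⟨K, hK⟩
  have hk2 : 2 ≤ Nat.find hex := by
    rw [Nat.le_find_iff]
    intro k hk
    interval_cases k
    · intro h0
      refine h1ne ?_
      rw [eq_bot_iff, ← h0]
      exact LieModule.antitone_lowerCentralSeries ℝ (MyL n) (MyL n) (by omega)
    · exact h1ne
  set m := Nat.find hex - 1 with hmdef
  have hm1 : 1 ≤ m := by omega
  have hmsucc : N (m + 1) = ⊥ := by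
    have : m + 1 = Nat.find hex := by omega
    rw [this]
    exact Nat.find_spec hex
  have hmne : N m ≠ ⊥ := Nat.find_min hex (by omega)
  have hzex : ∃ z : MyL n, z ∈ N m ∧ z ≠ 0 := by
    by_contra h
    push_neg at h
    exact hmne ((LieSubmodule.eq_bot_iff _).mpr h)
  obtain ⟨z, hzm, hz0⟩ := hzex
  refine ⟨z, hz0, ?_, ?_⟩
  · intro x
    have hmem : ⁅MyL.of x, z⁆ ∈ N (m + 1) := by
      rw [hN, LieModule.lowerCentralSeries_succ]
      exact LieSubmodule.lie_mem_lie (LieSubmodule.mem_top (MyL.of x)) hzm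
    rw [hmsucc] at hmem
    have h0 : ⁅MyL.of x, z⁆ = 0 := by rwa [LieSubmodule.mem_bot] at hmem
    exact h0
  · have hz1 : z ∈ N 1 := LieModule.antitone_lowerCentralSeries ℝ (MyL n) (MyL n) hm1 hzm
    rw [hN, LieModule.lowerCentralSeries_succ, LieModule.lowerCentralSeries_zero] at hz1
    have hz1' : z ∈ (⁅(⊤ : LieIdeal ℝ (MyL n)), (⊤ : LieSubmodule ℝ (MyL n) (MyL n))⁆ :
        LieSubmodule ℝ (MyL n) (MyL n)) := hz1
    rw [← LieSubmodule.mem_toSubmodule, LieSubmodule.lieIdeal_oper_eq_linear_span] at hz1'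
    have hsub : {w : MyL n | ∃ (x : (⊤ : LieIdeal ℝ (MyL n)))
        (n' : (⊤ : LieSubmodule ℝ (MyL n) (MyL n))), ⁅(x : MyL n), (n' : MyL n)⁆ = w}
        ⊆ {w : Fin n → ℝ | ∃ x y, μ x y = w} := by
      rintro w ⟨x, y, rfl⟩
      exact ⟨(x : MyL n), (y : MyL n), rfl⟩
    exact Submodule.span_mono hsub hz1'


theorem my_exists_central' {n : ℕ} {μ : (Fin n → ℝ) → (Fin n → ℝ) → (Fin n → ℝ)}
    (h2 : ∀ x, IsLinearMap ℝ (μ x)) (h1 : ∀ y, IsLinearMap ℝ (fun x => μ x y))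
    (hsk : ∀ x y, μ x y = - μ y x)
    (hjac : ∀ x y z, μ x (μ y z) + μ y (μ z x) + μ z (μ x y) = 0)
    (hnil : ∀ x : Fin n → ℝ, IsNilpotent (adMat μ x))
    (hne : ∃ x y : Fin n → ℝ, μ x y ≠ 0) :
    ∃ z : Fin n → ℝ, z ≠ 0 ∧ (∀ x, μ x z = 0) ∧
      z ∈ Submodule.span ℝ {w : Fin n → ℝ | ∃ x y, μ x y = w} := by
  letI : MyNilData n := ⟨μ, h2, h1, hsk, hjac⟩
  exact my_exists_central hnil hne


def myDot {n : ℕ} (z : Fin n → ℝ) : (Fin n → ℝ) →ₗ[ℝ] ℝ where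
  toFun w := ∑ k, w k * z k
  map_add' a b := by simp [add_mul, Finset.sum_add_distrib]
  map_smul' c a := by simp [Finset.mul_sum, mul_assoc]

lemma my_single_mulVec_t {n : ℕ} (μ : (Fin n → ℝ) → (Fin n → ℝ) → (Fin n → ℝ))
    (x : Fin n → ℝ) (k l : Fin n) :
    ((adMat μ x)ᵀ).mulVec (Pi.single k 1) l = μ x (Pi.single l 1) k := by
  simp [Matrix.mulVec, dotProduct, Matrix.transpose_apply, adMat, Pi.single_apply,
    mul_ite]

lemma my_single_mulVec {n : ℕ} (μ : (Fin n → ℝ) → (Fin n → ℝ) → (Fin n → ℝ))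
    (x : Fin n → ℝ) (k l : Fin n) :
    (adMat μ x).mulVec (Pi.single k 1) l = μ x (Pi.single k 1) l := by
  simp [Matrix.mulVec, dotProduct, adMat, Pi.single_apply, mul_ite]

theorem stmt7' {n : ℕ} (μ : (Fin n → ℝ) → (Fin n → ℝ) → (Fin n → ℝ))
    (hlin2 : ∀ x, IsLinearMap ℝ (μ x)) (hlin1 : ∀ y, IsLinearMap ℝ (fun x => μ x y))
    (hsk : ∀ x y, μ x y = - μ y x) (hjac : ∀ x y z, μ x (μ y z) + μ y (μ z x) + μ z (μ x y) = 0)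
    (hnil : ∀ x, IsNilpotent (adMat μ x))
    (hne : μ ≠ (fun _ _ => 0)) :
    (∃ x : Fin n → ℝ, ∑ k, ((Ric μ).mulVec x) k * x k < 0) ∧
    (∃ y : Fin n → ℝ, 0 < ∑ k, ((Ric μ).mulVec y) k * y k) := by
  classical
  have hne' : ∃ x y : Fin n → ℝ, μ x y ≠ 0 := by
    by_contra h
    push_neg at h
    exact hne (funext fun x => funext fun y => h x y)
  -- some basic bracket is nonzero
  have hbasic : ∃ i j : Fin n, μ (Pi.single i 1) (Pi.single j 1) ≠ 0 := by
    by_contra h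
    push_neg at h
    obtain ⟨a, b, hab⟩ := hne'
    refine hab ?_
    rw [my_mu_expand hlin1 hlin2 a b]
    refine Finset.sum_eq_zero fun i _ => Finset.sum_eq_zero fun j _ => ?_
    rw [h i j, smul_zero]
  obtain ⟨i0, j0, hij⟩ := hbasic
  obtain ⟨l0, hl0⟩ : ∃ l, μ (Pi.single i0 1) (Pi.single j0 1) l ≠ 0 := by
    by_contra h
    push_neg at h
    exact hij (funext h)
  -- total sum of squares of structure constants
  set F : ℝ := ∑ i, ∑ j, ∑ l, (μ (Pi.single i 1) (Pi.single j 1) l) ^ 2 with hF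
  have hFpos : 0 < F := by
    rw [hF]
    refine Finset.sum_pos' (fun i _ => Finset.sum_nonneg fun j _ => Finset.sum_nonneg
      fun l _ => sq_nonneg _) ⟨i0, Finset.mem_univ _, ?_⟩
    refine Finset.sum_pos' (fun j _ => Finset.sum_nonneg fun l _ => sq_nonneg _)
      ⟨j0, Finset.mem_univ _, ?_⟩
    refine Finset.sum_pos' (fun l _ => sq_nonneg _) ⟨l0, Finset.mem_univ _, ?_⟩
    positivity
  constructor
  · -- negative direction: sum over the basis is negative
    by_contra h
    push_neg at h
    have hq : ∀ k : Fin n, ∑ k', ((Ric μ).mulVec (Pi.single k 1)) k' * (Pi.single k 1 : Fin n → ℝ) k'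
        = -(1/2) * (∑ i, ∑ l, (μ (Pi.single i 1) (Pi.single k 1) l) ^ 2)
          + (1/4) * (∑ i, ∑ l, (μ (Pi.single i 1) (Pi.single l 1) k) ^ 2) := by
      intro k
      rw [my_ric_quad]
      congr 1
      · congr 1
        exact Finset.sum_congr rfl fun i _ => Finset.sum_congr rfl fun l _ => by
          rw [my_single_mulVec]
      · congr 1
        exact Finset.sum_congr rfl fun i _ => Finset.sum_congr rfl fun l _ => by
          rw [my_single_mulVec_t]
    have hsum : ∑ k, (∑ k', ((Ric μ).mulVec (Pi.single k 1)) k' * (Pi.single k 1 : Fin n → ℝ) k')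
        = -(1/4) * F := by
      have e1 : ∑ k, ∑ i, ∑ l, (μ (Pi.single i 1) (Pi.single k 1) l) ^ 2 = F := by
        rw [hF, Finset.sum_comm]
      have e2 : ∑ k, ∑ i, ∑ l, (μ (Pi.single i 1) (Pi.single l 1) k) ^ 2 = F := by
        rw [Finset.sum_comm, hF]
        exact Finset.sum_congr rfl fun i _ => Finset.sum_comm
      calc ∑ k, (∑ k', ((Ric μ).mulVec (Pi.single k 1)) k' * (Pi.single k 1 : Fin n → ℝ) k')
          = ∑ k, (-(1/2) * (∑ i, ∑ l, (μ (Pi.single i 1) (Pi.single k 1) l) ^ 2)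
            + (1/4) * (∑ i, ∑ l, (μ (Pi.single i 1) (Pi.single l 1) k) ^ 2)) :=
            Finset.sum_congr rfl fun k _ => hq k
        _ = -(1/2) * (∑ k, ∑ i, ∑ l, (μ (Pi.single i 1) (Pi.single k 1) l) ^ 2)
            + (1/4) * (∑ k, ∑ i, ∑ l, (μ (Pi.single i 1) (Pi.single l 1) k) ^ 2) := by
            rw [Finset.sum_add_distrib, ← Finset.mul_sum, ← Finset.mul_sum]
        _ = -(1/4) * F := by rw [e1, e2]; ring
    have hnonneg : (0:ℝ) ≤ ∑ k, (∑ k', ((Ric μ).mulVec (Pi.single k 1)) k' * (Pi.single k 1 : Fin n → ℝ) k') :=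
      Finset.sum_nonneg fun k _ => h _
    rw [hsum] at hnonneg
    nlinarith
  · -- positive direction
    obtain ⟨z, hz0, hzc, hzspan⟩ := my_exists_central' hlin2 hlin1 hsk hjac hnil hne'
    refine ⟨z, ?_⟩
    rw [my_ric_quad]
    have hfirst : ∑ i, ∑ l, ((adMat μ (Pi.single i 1)).mulVec z l) ^ 2 = 0 := by
      refine Finset.sum_eq_zero fun i _ => Finset.sum_eq_zero fun l _ => ?_
      rw [my_adMat_mulVec hlin2, hzc]
      simp
    rw [hfirst]
    have hAt : ∀ i l, ((adMat μ (Pi.single i 1))ᵀ).mulVec z l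
        = myDot z (μ (Pi.single i 1) (Pi.single l 1)) := by
      intro i l
      simp only [Matrix.mulVec, dotProduct, Matrix.transpose_apply, adMat, myDot,
        LinearMap.coe_mk, AddHom.coe_mk]
    -- some of these numbers is nonzero
    have hex : ∃ i l, myDot z (μ (Pi.single i 1) (Pi.single l 1)) ≠ 0 := by
      by_contra h
      push_neg at h
      have hall : ∀ w ∈ Submodule.span ℝ {w : Fin n → ℝ | ∃ x y, μ x y = w}, myDot z w = 0 := by
        intro w hw
        induction hw using Submodule.span_induction with
        | mem w hw =>
          obtain ⟨x, y, rfl⟩ := hw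
          rw [my_mu_expand hlin1 hlin2 x y, map_sum]
          refine Finset.sum_eq_zero fun i _ => ?_
          rw [map_sum]
          refine Finset.sum_eq_zero fun j _ => ?_
          rw [LinearMap.map_smul, h i j, smul_zero]
        | zero => simp
        | add a b _ _ ha hb => rw [map_add, ha, hb, add_zero]
        | smul c a _ ha => rw [LinearMap.map_smul, ha, smul_zero]
      have hzz : myDot z z = 0 := hall z hzspan
      have : ∑ k, z k * z k = 0 := hzz
      have hcomp : ∀ k, z k = 0 := by
        intro k
        have hk := (Finset.sum_eq_zero_iff_of_nonneg
          (fun k _ => mul_self_nonneg (z k))).mp this k (Finset.mem_univ k)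
        exact mul_self_eq_zero.mp hk
      exact hz0 (funext hcomp)
    obtain ⟨i1, l1, hi1⟩ := hex
    have hpos : 0 < ∑ i, ∑ l, (((adMat μ (Pi.single i 1))ᵀ).mulVec z l) ^ 2 := by
      refine Finset.sum_pos' (fun i _ => Finset.sum_nonneg fun l _ => sq_nonneg _)
        ⟨i1, Finset.mem_univ _, ?_⟩
      refine Finset.sum_pos' (fun l _ => sq_nonneg _) ⟨l1, Finset.mem_univ _, ?_⟩
      rw [hAt]
      positivity
    nlinarith

/-- the Ricci form of a nonzero nilpotent Lie bracket has both
negative and positive directions. -/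
theorem stmt7 {n : ℕ} (μ : (Fin n → ℝ) → (Fin n → ℝ) → (Fin n → ℝ))
    (hμ : IsNilBracket μ) (hne : μ ≠ (fun _ _ => 0)) :
    (∃ x : Fin n → ℝ, ∑ k, ((Ric μ).mulVec x) k * x k < 0) ∧
    (∃ y : Fin n → ℝ, 0 < ∑ k, ((Ric μ).mulVec y) k * y k) := by
  exact stmt7' μ hμ.1.1 hμ.1.2.1 hμ.1.2.2 hμ.2.1 hμ.2.2 hne
end
end

section
/- Along any solution μ(t) of the bracket flow μ' = δ_μ(Ric_μ), one has d/dt ‖μ(t)‖² = -8 tr(Ric_{μ(t)}²); in particular ‖μ(t)‖ is nonincreasing. -/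
open Matrix BigOperators

noncomputable section

namespace Stmt14Aux
variable {n : ℕ}

lemma lin_expand (f : (Fin n → ℝ) → (Fin n → ℝ)) (hf : IsLinearMap ℝ f)
    (v : Fin n → ℝ) (k : Fin n) : f v k = ∑ l, v l * f (Pi.single l 1) k := by
  have h1 : v = ∑ l, v l • (Pi.single l 1 : Fin n → ℝ) := by
    funext m
    simp [Finset.sum_apply, Pi.single_apply]
  have h2 : f (∑ l, v l • (Pi.single l 1 : Fin n → ℝ))
      = ∑ l, v l • f (Pi.single l 1) := by
    calc f (∑ l, v l • (Pi.single l 1 : Fin n → ℝ))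
        = (IsLinearMap.mk' f hf) (∑ l, v l • (Pi.single l 1 : Fin n → ℝ)) := rfl
      _ = ∑ l, (IsLinearMap.mk' f hf) (v l • (Pi.single l 1 : Fin n → ℝ)) := by
          rw [map_sum]
      _ = ∑ l, v l • f (Pi.single l 1) := by simp
  conv_lhs => rw [h1]
  rw [h2]
  simp [Finset.sum_apply]

lemma sum4_rot (f : Fin n → Fin n → Fin n → Fin n → ℝ) :
    ∑ a, ∑ b, ∑ c, ∑ d, f a b c d = ∑ d, ∑ a, ∑ b, ∑ c, f a b c d := by
  calc ∑ a, ∑ b, ∑ c, ∑ d, f a b c d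
      = ∑ a, ∑ b, ∑ d, ∑ c, f a b c d :=
        Finset.sum_congr rfl fun a _ => Finset.sum_congr rfl fun b _ =>
          Finset.sum_comm
    _ = ∑ a, ∑ d, ∑ b, ∑ c, f a b c d :=
        Finset.sum_congr rfl fun a _ => Finset.sum_comm
    _ = ∑ d, ∑ a, ∑ b, ∑ c, f a b c d := Finset.sum_comm

lemma sum4_pair (f : Fin n → Fin n → Fin n → Fin n → ℝ) :
    ∑ a, ∑ b, ∑ c, ∑ d, f a b c d = ∑ c, ∑ d, ∑ a, ∑ b, f a b c d := by
  rw [sum4_rot, sum4_rot]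

lemma sum4_congr {f g : Fin n → Fin n → Fin n → Fin n → ℝ}
    (h : ∀ a b c d, f a b c d = g a b c d) :
    ∑ a, ∑ b, ∑ c, ∑ d, f a b c d = ∑ a, ∑ b, ∑ c, ∑ d, g a b c d :=
  Finset.sum_congr rfl fun a _ => Finset.sum_congr rfl fun b _ =>
    Finset.sum_congr rfl fun c _ => Finset.sum_congr rfl fun d _ => h a b c d

lemma delta_apply (μ : (Fin n → ℝ) → (Fin n → ℝ) → (Fin n → ℝ)) (hsb : IsSkewBil μ)
    (A : Matrix (Fin n) (Fin n) ℝ) (i j k : Fin n) :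
    deltaMap μ A (Pi.single i 1) (Pi.single j 1) k
      = (∑ l, A l i * μ (Pi.single l 1) (Pi.single j 1) k)
      + (∑ l, A l j * μ (Pi.single i 1) (Pi.single l 1) k)
      - (∑ l, A k l * μ (Pi.single i 1) (Pi.single j 1) l) := by
  unfold deltaMap
  rw [Matrix.mulVec_single, Matrix.mulVec_single]
  simp only [Pi.add_apply, Pi.sub_apply]
  congr 1
  congr 1
  · rw [lin_expand (fun x => μ x (Pi.single j 1)) (hsb.2.1 _)]
    simp
  · rw [lin_expand (μ (Pi.single i 1)) (hsb.1 _)]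
    simp

lemma ric_entry (μ : (Fin n → ℝ) → (Fin n → ℝ) → (Fin n → ℝ)) (m l : Fin n) :
    Ric μ m l
      = -(1/2 : ℝ) * ∑ j, ∑ k, μ (Pi.single j 1) (Pi.single m 1) k *
          μ (Pi.single j 1) (Pi.single l 1) k
      + (1/4 : ℝ) * ∑ j, ∑ k, μ (Pi.single j 1) (Pi.single k 1) m *
          μ (Pi.single j 1) (Pi.single k 1) l := by
  simp [Ric, Matrix.add_apply, Matrix.smul_apply, Matrix.sum_apply,
    Matrix.mul_apply, Matrix.transpose_apply, adMat, smul_eq_mul]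

lemma trace_mul_Ric (μ : (Fin n → ℝ) → (Fin n → ℝ) → (Fin n → ℝ))
    (A : Matrix (Fin n) (Fin n) ℝ) :
    (A * Ric μ).trace
      = -(1/2 : ℝ) * ∑ l, ∑ m, ∑ j, ∑ k, A l m *
          (μ (Pi.single j 1) (Pi.single m 1) k * μ (Pi.single j 1) (Pi.single l 1) k)
      + (1/4 : ℝ) * ∑ l, ∑ m, ∑ j, ∑ k, A l m *
          (μ (Pi.single j 1) (Pi.single k 1) m * μ (Pi.single j 1) (Pi.single k 1) l) := by
  have h : (A * Ric μ).trace = ∑ l, ∑ m, A l m * Ric μ m l := by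
    simp [Matrix.trace, Matrix.diag, Matrix.mul_apply]
  rw [h]
  have h2 : ∀ l m : Fin n, A l m * Ric μ m l
      = -(1/2 : ℝ) * (∑ j, ∑ k, A l m *
          (μ (Pi.single j 1) (Pi.single m 1) k * μ (Pi.single j 1) (Pi.single l 1) k))
      + (1/4 : ℝ) * (∑ j, ∑ k, A l m *
          (μ (Pi.single j 1) (Pi.single k 1) m * μ (Pi.single j 1) (Pi.single k 1) l)) := by
    intro l m
    have pull : ∀ X : Fin n → Fin n → ℝ,
        A l m * ∑ j, ∑ k, X j k = ∑ j, ∑ k, A l m * X j k := by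
      intro X
      rw [Finset.mul_sum]
      exact Finset.sum_congr rfl fun j _ => Finset.mul_sum _ _ _
    rw [ric_entry, mul_add, ← mul_assoc, ← mul_assoc, mul_comm (A l m) (-(1/2 : ℝ)),
      mul_comm (A l m) ((1/4 : ℝ)), mul_assoc, mul_assoc, pull, pull]
  calc ∑ l, ∑ m, A l m * Ric μ m l
      = ∑ l, ∑ m, (-(1/2 : ℝ) * (∑ j, ∑ k, A l m *
          (μ (Pi.single j 1) (Pi.single m 1) k * μ (Pi.single j 1) (Pi.single l 1) k))
      + (1/4 : ℝ) * (∑ j, ∑ k, A l m *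
          (μ (Pi.single j 1) (Pi.single k 1) m * μ (Pi.single j 1) (Pi.single k 1) l))) :=
        Finset.sum_congr rfl fun l _ => Finset.sum_congr rfl fun m _ => h2 l m
    _ = _ := by
        simp only [Finset.sum_add_distrib, ← Finset.mul_sum]

lemma ric_symm (μ : (Fin n → ℝ) → (Fin n → ℝ) → (Fin n → ℝ)) :
    (Ric μ)ᵀ = Ric μ := by
  unfold Ric
  simp [Matrix.transpose_add, Matrix.transpose_smul, Matrix.transpose_sum,
    Matrix.transpose_mul, Matrix.transpose_transpose]

lemma trace_sq_nonneg (μ : (Fin n → ℝ) → (Fin n → ℝ) → (Fin n → ℝ)) :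
    0 ≤ (Ric μ * Ric μ).trace := by
  have hs := ric_symm μ
  have h : ∀ i j : Fin n, Ric μ j i = Ric μ i j := by
    intro i j
    conv_lhs => rw [← hs]
    rfl
  simp only [Matrix.trace, Matrix.diag, Matrix.mul_apply]
  refine Finset.sum_nonneg fun i _ => Finset.sum_nonneg fun j _ => ?_
  rw [h i j]
  exact mul_self_nonneg _

lemma key (μ : (Fin n → ℝ) → (Fin n → ℝ) → (Fin n → ℝ)) (hsb : IsSkewBil μ)
    (A : Matrix (Fin n) (Fin n) ℝ) :
    innV (deltaMap μ A) μ = -4 * (A * Ric μ).trace := by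
  have hskew : ∀ x y : Fin n → ℝ, ∀ k, μ x y k = - μ y x k := by
    intro x y k
    rw [hsb.2.2 x y]
    rfl
  have e1 : innV (deltaMap μ A) μ
      = (∑ i, ∑ j, ∑ k, ∑ l, (A l i * μ (Pi.single l 1) (Pi.single j 1) k) *
          μ (Pi.single i 1) (Pi.single j 1) k)
      + (∑ i, ∑ j, ∑ k, ∑ l, (A l j * μ (Pi.single i 1) (Pi.single l 1) k) *
          μ (Pi.single i 1) (Pi.single j 1) k)
      - (∑ i, ∑ j, ∑ k, ∑ l, (A k l * μ (Pi.single i 1) (Pi.single j 1) l) *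
          μ (Pi.single i 1) (Pi.single j 1) k) := by
    unfold innV
    calc (∑ i, ∑ j, ∑ k, deltaMap μ A (Pi.single i 1) (Pi.single j 1) k *
            μ (Pi.single i 1) (Pi.single j 1) k)
        = ∑ i, ∑ j, ∑ k,
            ((∑ l, (A l i * μ (Pi.single l 1) (Pi.single j 1) k) *
              μ (Pi.single i 1) (Pi.single j 1) k)
           + (∑ l, (A l j * μ (Pi.single i 1) (Pi.single l 1) k) *
              μ (Pi.single i 1) (Pi.single j 1) k)
           - (∑ l, (A k l * μ (Pi.single i 1) (Pi.single j 1) l) *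
              μ (Pi.single i 1) (Pi.single j 1) k)) := by
          refine Finset.sum_congr rfl fun i _ => Finset.sum_congr rfl fun j _ =>
            Finset.sum_congr rfl fun k _ => ?_
          rw [delta_apply μ hsb A i j k, sub_mul, add_mul, Finset.sum_mul,
            Finset.sum_mul, Finset.sum_mul]
      _ = _ := by
          simp only [Finset.sum_sub_distrib, Finset.sum_add_distrib]
  have hS2 : (∑ i, ∑ j, ∑ k, ∑ l, (A l j * μ (Pi.single i 1) (Pi.single l 1) k) *
          μ (Pi.single i 1) (Pi.single j 1) k)
      = (∑ i, ∑ j, ∑ k, ∑ l, (A l i * μ (Pi.single l 1) (Pi.single j 1) k) *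
          μ (Pi.single i 1) (Pi.single j 1) k) := by
    calc (∑ i, ∑ j, ∑ k, ∑ l, (A l j * μ (Pi.single i 1) (Pi.single l 1) k) *
            μ (Pi.single i 1) (Pi.single j 1) k)
        = ∑ i, ∑ j, ∑ k, ∑ l, (A l j * μ (Pi.single l 1) (Pi.single i 1) k) *
            μ (Pi.single j 1) (Pi.single i 1) k := by
          refine sum4_congr fun i j k l => ?_
          rw [hskew (Pi.single i 1) (Pi.single l 1) k,
            hskew (Pi.single i 1) (Pi.single j 1) k]
          ring
      _ = _ := Finset.sum_comm
  have hS1 : (∑ i, ∑ j, ∑ k, ∑ l, (A l i * μ (Pi.single l 1) (Pi.single j 1) k) *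
          μ (Pi.single i 1) (Pi.single j 1) k)
      = ∑ l, ∑ m, ∑ j, ∑ k, A l m *
          (μ (Pi.single j 1) (Pi.single m 1) k * μ (Pi.single j 1) (Pi.single l 1) k) := by
    calc (∑ i, ∑ j, ∑ k, ∑ l, (A l i * μ (Pi.single l 1) (Pi.single j 1) k) *
            μ (Pi.single i 1) (Pi.single j 1) k)
        = ∑ i, ∑ j, ∑ k, ∑ l, A l i *
            (μ (Pi.single j 1) (Pi.single i 1) k * μ (Pi.single j 1) (Pi.single l 1) k) := by
          refine sum4_congr fun i j k l => ?_
          rw [hskew (Pi.single l 1) (Pi.single j 1) k,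
            hskew (Pi.single i 1) (Pi.single j 1) k]
          ring
      _ = _ := sum4_rot _
  have hS3 : (∑ i, ∑ j, ∑ k, ∑ l, (A k l * μ (Pi.single i 1) (Pi.single j 1) l) *
          μ (Pi.single i 1) (Pi.single j 1) k)
      = ∑ l, ∑ m, ∑ j, ∑ k, A l m *
          (μ (Pi.single j 1) (Pi.single k 1) m * μ (Pi.single j 1) (Pi.single k 1) l) := by
    calc (∑ i, ∑ j, ∑ k, ∑ l, (A k l * μ (Pi.single i 1) (Pi.single j 1) l) *
            μ (Pi.single i 1) (Pi.single j 1) k)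
        = ∑ i, ∑ j, ∑ k, ∑ l, A k l *
            (μ (Pi.single i 1) (Pi.single j 1) l * μ (Pi.single i 1) (Pi.single j 1) k) := by
          refine sum4_congr fun i j k l => ?_
          ring
      _ = _ := sum4_pair _
  rw [trace_mul_Ric, e1, hS2, hS1, hS3]
  ring

end Stmt14Aux

/-- `d/dt ‖μ(t)‖² = -8 tr(Ric_{μ(t)}²)`; in particular `‖μ(t)‖`
is nonincreasing. -/
theorem stmt14 {n : ℕ} (μ : ℝ → (Fin n → ℝ) → (Fin n → ℝ) → (Fin n → ℝ))
    (hsb : ∀ t, IsSkewBil (μ t))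
    (hflow : ∀ t, ∀ x y : Fin n → ℝ,
      HasDerivAt (fun s => μ s x y) (deltaMap (μ t) (Ric (μ t)) x y) t) :
    (∀ t, HasDerivAt (fun s => innV (μ s) (μ s))
      (-8 * (Ric (μ t) * Ric (μ t)).trace) t) ∧
    Antitone (fun t => Real.sqrt (innV (μ t) (μ t))) := by
  have hderiv : ∀ t, HasDerivAt (fun s => innV (μ s) (μ s))
      (-8 * (Ric (μ t) * Ric (μ t)).trace) t := by
    intro t
    have h2 : HasDerivAt (fun s => ∑ i, ∑ j, ∑ k,
          μ s (Pi.single i 1) (Pi.single j 1) k * μ s (Pi.single i 1) (Pi.single j 1) k)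
        (∑ i, ∑ j, ∑ k,
          (deltaMap (μ t) (Ric (μ t)) (Pi.single i 1) (Pi.single j 1) k *
              μ t (Pi.single i 1) (Pi.single j 1) k
          + μ t (Pi.single i 1) (Pi.single j 1) k *
              deltaMap (μ t) (Ric (μ t)) (Pi.single i 1) (Pi.single j 1) k)) t := by
      refine HasDerivAt.fun_sum fun i _ => HasDerivAt.fun_sum fun j _ => HasDerivAt.fun_sum fun k _ => ?_
      exact ((hasDerivAt_pi.mp (hflow t _ _)) k).mul ((hasDerivAt_pi.mp (hflow t _ _)) k)
    have hval : (∑ i, ∑ j, ∑ k,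
          (deltaMap (μ t) (Ric (μ t)) (Pi.single i 1) (Pi.single j 1) k *
              μ t (Pi.single i 1) (Pi.single j 1) k
          + μ t (Pi.single i 1) (Pi.single j 1) k *
              deltaMap (μ t) (Ric (μ t)) (Pi.single i 1) (Pi.single j 1) k))
        = 2 * innV (deltaMap (μ t) (Ric (μ t))) (μ t) := by
      unfold innV
      rw [Finset.mul_sum]
      refine Finset.sum_congr rfl fun i _ => ?_
      rw [Finset.mul_sum]
      refine Finset.sum_congr rfl fun j _ => ?_
      rw [Finset.mul_sum]
      refine Finset.sum_congr rfl fun k _ => ?_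
      ring
    rw [hval, Stmt14Aux.key (μ t) (hsb t) (Ric (μ t))] at h2
    have : (2 : ℝ) * (-4 * (Ric (μ t) * Ric (μ t)).trace)
        = -8 * (Ric (μ t) * Ric (μ t)).trace := by ring
    rw [this] at h2
    exact h2
  refine ⟨hderiv, ?_⟩
  have hmono : Antitone (fun t => innV (μ t) (μ t)) := by
    apply antitone_of_deriv_nonpos
    · intro t
      exact (hderiv t).differentiableAt
    · intro t
      rw [(hderiv t).deriv]
      have h0 := Stmt14Aux.trace_sq_nonneg (μ t)
      nlinarith
  intro a b hab
  exact Real.sqrt_le_sqrt (hmono hab)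
end
end

section
/- If μ : [0,T) → V_n is a solution of the bracket flow μ' = δ_μ(Ric_μ) with μ(0) = μ₀, then ‖μ(t)‖² ≤ 1/(t/(2n) + 1/‖μ₀‖²) ≤ 2n/t for all t ∈ (0,T). In particular any solution remains bounded and ‖μ(t)‖ → 0 as t → ∞ when T = ∞. -/
open Matrix BigOperators

noncomputable section

namespace Stmt15

variable {n : ℕ}

lemma bil_left {ν : (Fin n → ℝ) → (Fin n → ℝ) → (Fin n → ℝ)}
    (h : ∀ y, IsLinearMap ℝ (fun x => ν x y)) (x y : Fin n → ℝ) :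
    ν x y = ∑ p, x p • ν (Pi.single p 1) y := by
  let L : (Fin n → ℝ) →ₗ[ℝ] (Fin n → ℝ) := IsLinearMap.mk' (fun x => ν x y) (h y)
  have hLx : ∀ z, L z = ν z y := fun z => rfl
  have hx : (∑ p, x p • (Pi.single p 1 : Fin n → ℝ)) = x := by
    funext q
    simp [Finset.sum_apply, Pi.single_apply]
  calc ν x y = L (∑ p, x p • (Pi.single p 1 : Fin n → ℝ)) := by rw [hx, hLx]
    _ = ∑ p, x p • ν (Pi.single p 1) y := by
        rw [map_sum]
        exact Finset.sum_congr rfl fun p _ => by rw [_root_.map_smul, hLx]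

lemma bil_right {ν : (Fin n → ℝ) → (Fin n → ℝ) → (Fin n → ℝ)}
    (h : ∀ x, IsLinearMap ℝ (ν x)) (x y : Fin n → ℝ) :
    ν x y = ∑ p, y p • ν x (Pi.single p 1) := by
  let L : (Fin n → ℝ) →ₗ[ℝ] (Fin n → ℝ) := IsLinearMap.mk' (ν x) (h x)
  have hLx : ∀ z, L z = ν x z := fun z => rfl
  have hx : (∑ p, y p • (Pi.single p 1 : Fin n → ℝ)) = y := by
    funext q
    simp [Finset.sum_apply, Pi.single_apply]
  calc ν x y = L (∑ p, y p • (Pi.single p 1 : Fin n → ℝ)) := by rw [hx, hLx]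
    _ = ∑ p, y p • ν x (Pi.single p 1) := by
        rw [map_sum]
        exact Finset.sum_congr rfl fun p _ => by rw [_root_.map_smul, hLx]


lemma delta_apply {ν : (Fin n → ℝ) → (Fin n → ℝ) → (Fin n → ℝ)} (hsb : IsSkewBil ν)
    (A : Matrix (Fin n) (Fin n) ℝ) (i j k : Fin n) :
    deltaMap ν A (Pi.single i 1) (Pi.single j 1) k
      = (∑ p, A p i * ν (Pi.single p 1) (Pi.single j 1) k)
      + (∑ p, A p j * ν (Pi.single i 1) (Pi.single p 1) k)
      - (∑ p, A k p * ν (Pi.single i 1) (Pi.single j 1) p) := by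
  obtain ⟨hR, hL, hskew⟩ := hsb
  simp only [deltaMap, Pi.add_apply, Pi.sub_apply]
  have h1 : ν (A.mulVec (Pi.single i 1)) (Pi.single j 1) k
      = ∑ p, A p i * ν (Pi.single p 1) (Pi.single j 1) k := by
    rw [Matrix.mulVec_single, bil_left hL]
    simp [Finset.sum_apply]
  have h2 : ν (Pi.single i 1) (A.mulVec (Pi.single j 1)) k
      = ∑ p, A p j * ν (Pi.single i 1) (Pi.single p 1) k := by
    rw [Matrix.mulVec_single, bil_right hR]
    simp [Finset.sum_apply]
  have h3 : A.mulVec (ν (Pi.single i 1) (Pi.single j 1)) k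
      = ∑ p, A k p * ν (Pi.single i 1) (Pi.single j 1) p := by
    simp [Matrix.mulVec, dotProduct]
  rw [h1, h2, h3]

lemma trace_mul_expand (A B : Matrix (Fin n) (Fin n) ℝ) :
    Matrix.trace (A * B) = ∑ a, ∑ b, A a b * B b a := by
  simp [Matrix.trace, Matrix.diag, Matrix.mul_apply]

lemma Ric_apply (ν : (Fin n → ℝ) → (Fin n → ℝ) → (Fin n → ℝ)) (b a : Fin n) :
    Ric ν b a = -(1/2 : ℝ) * (∑ i, ∑ k, ν (Pi.single i 1) (Pi.single b 1) k * ν (Pi.single i 1) (Pi.single a 1) k)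
      + (1/4 : ℝ) * (∑ i, ∑ j, ν (Pi.single i 1) (Pi.single j 1) b * ν (Pi.single i 1) (Pi.single j 1) a) := by
  simp only [Ric, Matrix.add_apply, Matrix.smul_apply, Matrix.sum_apply, Matrix.mul_apply,
    Matrix.transpose_apply, adMat, smul_eq_mul]

lemma Ric_symm (ν : (Fin n → ℝ) → (Fin n → ℝ) → (Fin n → ℝ)) : (Ric ν)ᵀ = Ric ν := by
  simp [Ric, Matrix.transpose_add, Matrix.transpose_smul, Matrix.transpose_sum,
    Matrix.transpose_mul, Matrix.transpose_transpose]

lemma trace_sq_le (R : Matrix (Fin n) (Fin n) ℝ) (hR : Rᵀ = R) :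
    (Matrix.trace R)^2 ≤ (n : ℝ) * Matrix.trace (R * R) := by
  have hRR : Matrix.trace (R * R) = ∑ a, ∑ b, (R a b)^2 := by
    rw [trace_mul_expand]
    refine Finset.sum_congr rfl fun a _ => Finset.sum_congr rfl fun b _ => ?_
    have h : R b a = R a b := by
      have := congrFun (congrFun hR a) b
      rw [Matrix.transpose_apply] at this
      exact this
    rw [h]; ring
  have hcs := Finset.sum_mul_sq_le_sq_mul_sq Finset.univ (fun a => R a a) (fun _ => (1:ℝ))
  simp only [mul_one, one_pow, Finset.sum_const, Finset.card_univ, Fintype.card_fin,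
    nsmul_eq_mul] at hcs
  have h2 : (∑ a, (R a a)^2) ≤ ∑ a, ∑ b, (R a b)^2 :=
    Finset.sum_le_sum fun a _ => Finset.single_le_sum (f := fun b => R a b ^ 2) (fun b _ => sq_nonneg _) (Finset.mem_univ a)
  have htr : Matrix.trace R = ∑ a, R a a := rfl
  rw [htr, hRR]
  nlinarith [hcs, h2, Nat.cast_nonneg (α := ℝ) n]


lemma quad (f : Fin n → Fin n → Fin n → Fin n → ℝ) :
    (∑ i, ∑ j, ∑ k, ∑ p, f i j k p)
      = ∑ x : Fin n × Fin n × Fin n × Fin n, f x.1 x.2.1 x.2.2.1 x.2.2.2 := by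
  rw [Fintype.sum_prod_type]
  refine Finset.sum_congr rfl fun i _ => ?_
  rw [Fintype.sum_prod_type]
  refine Finset.sum_congr rfl fun j _ => ?_
  rw [Fintype.sum_prod_type]

lemma trip (f : Fin n → Fin n → Fin n → ℝ) :
    (∑ i, ∑ j, ∑ k, f i j k) = ∑ x : Fin n × Fin n × Fin n, f x.1 x.2.1 x.2.2 := by
  rw [Fintype.sum_prod_type]
  refine Finset.sum_congr rfl fun i _ => ?_
  rw [Fintype.sum_prod_type]

lemma inn_delta {ν : (Fin n → ℝ) → (Fin n → ℝ) → (Fin n → ℝ)} (hsb : IsSkewBil ν)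
    (A : Matrix (Fin n) (Fin n) ℝ) :
    innV (deltaMap ν A) ν = -4 * Matrix.trace (A * Ric ν) := by
  have hskew : ∀ a b k, ν (Pi.single a 1) (Pi.single b 1) k
      = - ν (Pi.single b 1) (Pi.single a 1) k := by
    intro a b k
    rw [hsb.2.2 (Pi.single a 1) (Pi.single b 1)]
    simp
  have hL : innV (deltaMap ν A) ν
      = (∑ i, ∑ j, ∑ k, ∑ p, A p i * ν (Pi.single p 1) (Pi.single j 1) k * ν (Pi.single i 1) (Pi.single j 1) k)
      + (∑ i, ∑ j, ∑ k, ∑ p, A p j * ν (Pi.single i 1) (Pi.single p 1) k * ν (Pi.single i 1) (Pi.single j 1) k)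
      - (∑ i, ∑ j, ∑ k, ∑ p, A k p * ν (Pi.single i 1) (Pi.single j 1) p * ν (Pi.single i 1) (Pi.single j 1) k) := by
    simp only [innV, delta_apply hsb, sub_mul, add_mul, Finset.sum_mul,
      Finset.sum_add_distrib, Finset.sum_sub_distrib]
  have hR : -4 * Matrix.trace (A * Ric ν)
      = ∑ a, ∑ b, (2 * (A a b * (∑ i, ∑ k, ν (Pi.single i 1) (Pi.single b 1) k * ν (Pi.single i 1) (Pi.single a 1) k))
          - A a b * (∑ i, ∑ j, ν (Pi.single i 1) (Pi.single j 1) b * ν (Pi.single i 1) (Pi.single j 1) a)) := by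
    rw [trace_mul_expand, Finset.mul_sum]
    refine Finset.sum_congr rfl fun a _ => ?_
    rw [Finset.mul_sum]
    refine Finset.sum_congr rfl fun b _ => ?_
    rw [Ric_apply]
    ring
  have hU : (∑ a, ∑ b, A a b * (∑ i, ∑ k, ν (Pi.single i 1) (Pi.single b 1) k * ν (Pi.single i 1) (Pi.single a 1) k))
      = ∑ a, ∑ b, ∑ i, ∑ k, A a b * (ν (Pi.single i 1) (Pi.single b 1) k * ν (Pi.single i 1) (Pi.single a 1) k) := by
    refine Finset.sum_congr rfl fun a _ => Finset.sum_congr rfl fun b _ => ?_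
    rw [Finset.mul_sum]
    exact Finset.sum_congr rfl fun i _ => Finset.mul_sum _ _ _
  have hV : (∑ a, ∑ b, A a b * (∑ i, ∑ j, ν (Pi.single i 1) (Pi.single j 1) b * ν (Pi.single i 1) (Pi.single j 1) a))
      = ∑ a, ∑ b, ∑ i, ∑ j, A a b * (ν (Pi.single i 1) (Pi.single j 1) b * ν (Pi.single i 1) (Pi.single j 1) a) := by
    refine Finset.sum_congr rfl fun a _ => Finset.sum_congr rfl fun b _ => ?_
    rw [Finset.mul_sum]
    exact Finset.sum_congr rfl fun i _ => Finset.mul_sum _ _ _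
  have hT1 : (∑ i, ∑ j, ∑ k, ∑ p, A p i * ν (Pi.single p 1) (Pi.single j 1) k * ν (Pi.single i 1) (Pi.single j 1) k)
      = ∑ a, ∑ b, ∑ i, ∑ k, A a b * (ν (Pi.single i 1) (Pi.single b 1) k * ν (Pi.single i 1) (Pi.single a 1) k) := by
    rw [quad, quad]
    refine Fintype.sum_equiv
      ⟨fun x => (x.2.2.2, x.1, x.2.1, x.2.2.1), fun y => (y.2.1, y.2.2.1, y.2.2.2, y.1),
        fun ⟨a,b,c,d⟩ => rfl, fun ⟨a,b,c,d⟩ => rfl⟩ _ _ ?_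
    rintro ⟨i, j, k, p⟩
    simp only [Equiv.coe_fn_mk]
    rw [hskew p j, hskew i j]
    ring
  have hT2 : (∑ i, ∑ j, ∑ k, ∑ p, A p j * ν (Pi.single i 1) (Pi.single p 1) k * ν (Pi.single i 1) (Pi.single j 1) k)
      = ∑ a, ∑ b, ∑ i, ∑ k, A a b * (ν (Pi.single i 1) (Pi.single b 1) k * ν (Pi.single i 1) (Pi.single a 1) k) := by
    rw [quad, quad]
    refine Fintype.sum_equiv
      ⟨fun x => (x.2.2.2, x.2.1, x.1, x.2.2.1), fun y => (y.2.2.1, y.2.1, y.2.2.2, y.1),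
        fun ⟨a,b,c,d⟩ => rfl, fun ⟨a,b,c,d⟩ => rfl⟩ _ _ ?_
    rintro ⟨i, j, k, p⟩
    simp only [Equiv.coe_fn_mk]
    ring
  have hT3 : (∑ i, ∑ j, ∑ k, ∑ p, A k p * ν (Pi.single i 1) (Pi.single j 1) p * ν (Pi.single i 1) (Pi.single j 1) k)
      = ∑ a, ∑ b, ∑ i, ∑ j, A a b * (ν (Pi.single i 1) (Pi.single j 1) b * ν (Pi.single i 1) (Pi.single j 1) a) := by
    rw [quad, quad]
    refine Fintype.sum_equiv
      ⟨fun x => (x.2.2.1, x.2.2.2, x.1, x.2.1), fun y => (y.2.2.1, y.2.2.2, y.1, y.2.1),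
        fun ⟨a,b,c,d⟩ => rfl, fun ⟨a,b,c,d⟩ => rfl⟩ _ _ ?_
    rintro ⟨i, j, k, p⟩
    simp only [Equiv.coe_fn_mk]
    ring
  have hsplit : (∑ a, ∑ b, (2 * (A a b * (∑ i, ∑ k, ν (Pi.single i 1) (Pi.single b 1) k * ν (Pi.single i 1) (Pi.single a 1) k))
          - A a b * (∑ i, ∑ j, ν (Pi.single i 1) (Pi.single j 1) b * ν (Pi.single i 1) (Pi.single j 1) a)))
      = 2 * (∑ a, ∑ b, A a b * (∑ i, ∑ k, ν (Pi.single i 1) (Pi.single b 1) k * ν (Pi.single i 1) (Pi.single a 1) k))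
      - (∑ a, ∑ b, A a b * (∑ i, ∑ j, ν (Pi.single i 1) (Pi.single j 1) b * ν (Pi.single i 1) (Pi.single j 1) a)) := by
    simp [Finset.sum_sub_distrib, Finset.mul_sum]
  rw [hL, hR, hsplit, hU, hV, hT1, hT2, hT3]
  ring

lemma trace_Ric (ν : (Fin n → ℝ) → (Fin n → ℝ) → (Fin n → ℝ)) :
    Matrix.trace (Ric ν) = -(1/4 : ℝ) * innV ν ν := by
  have h1 : Matrix.trace (Ric ν) = ∑ a,
      (-(1/2 : ℝ) * (∑ i, ∑ k, ν (Pi.single i 1) (Pi.single a 1) k * ν (Pi.single i 1) (Pi.single a 1) k)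
      + (1/4 : ℝ) * (∑ i, ∑ j, ν (Pi.single i 1) (Pi.single j 1) a * ν (Pi.single i 1) (Pi.single j 1) a)) := by
    refine Finset.sum_congr rfl fun a _ => ?_
    exact Ric_apply ν a a
  have h2 : (∑ a, ∑ i, ∑ k, ν (Pi.single i 1) (Pi.single a 1) k * ν (Pi.single i 1) (Pi.single a 1) k)
      = innV ν ν := by
    rw [innV, trip, trip]
    refine Fintype.sum_equiv
      ⟨fun x => (x.2.1, x.1, x.2.2), fun y => (y.2.1, y.1, y.2.2),
        fun ⟨a,b,c⟩ => rfl, fun ⟨a,b,c⟩ => rfl⟩ _ _ ?_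
    rintro ⟨a, i, k⟩
    rfl
  have h3 : (∑ a, ∑ i, ∑ j, ν (Pi.single i 1) (Pi.single j 1) a * ν (Pi.single i 1) (Pi.single j 1) a)
      = innV ν ν := by
    rw [innV, trip, trip]
    refine Fintype.sum_equiv
      ⟨fun x => (x.2.1, x.2.2, x.1), fun y => (y.2.2, y.1, y.2.1),
        fun ⟨a,b,c⟩ => rfl, fun ⟨a,b,c⟩ => rfl⟩ _ _ ?_
    rintro ⟨a, i, j⟩
    rfl
  rw [h1, Finset.sum_add_distrib, ← Finset.mul_sum, ← Finset.mul_sum, h2, h3]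
  ring


lemma innV_pos {ν : (Fin n → ℝ) → (Fin n → ℝ) → (Fin n → ℝ)} (hb : IsSkewBil ν)
    (hne : ν ≠ fun _ _ => 0) : 0 < innV ν ν := by
  have hex : ∃ i j k, ν (Pi.single i 1) (Pi.single j 1) k ≠ 0 := by
    by_contra h
    push_neg at h
    apply hne
    funext x y k
    rw [bil_left hb.2.1 x y]
    simp only [Finset.sum_apply, Pi.smul_apply, smul_eq_mul]
    refine Finset.sum_eq_zero fun p _ => ?_
    rw [bil_right hb.1 (Pi.single p 1) y]
    simp [Finset.sum_apply, h]
  obtain ⟨i, j, k, hijk⟩ := hex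
  have hterm : 0 < ν (Pi.single i 1) (Pi.single j 1) k * ν (Pi.single i 1) (Pi.single j 1) k :=
    mul_self_pos.2 hijk
  have h3 : ν (Pi.single i 1) (Pi.single j 1) k * ν (Pi.single i 1) (Pi.single j 1) k
      ≤ ∑ k', ν (Pi.single i 1) (Pi.single j 1) k' * ν (Pi.single i 1) (Pi.single j 1) k' :=
    Finset.single_le_sum (f := fun k' => ν (Pi.single i 1) (Pi.single j 1) k' * ν (Pi.single i 1) (Pi.single j 1) k') (fun _ _ => mul_self_nonneg _) (Finset.mem_univ k)
  have h2 : (∑ k', ν (Pi.single i 1) (Pi.single j 1) k' * ν (Pi.single i 1) (Pi.single j 1) k')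
      ≤ ∑ j', ∑ k', ν (Pi.single i 1) (Pi.single j' 1) k' * ν (Pi.single i 1) (Pi.single j' 1) k' :=
    Finset.single_le_sum (f := fun j' => ∑ k', ν (Pi.single i 1) (Pi.single j' 1) k' * ν (Pi.single i 1) (Pi.single j' 1) k')
      (fun _ _ => Finset.sum_nonneg fun _ _ => mul_self_nonneg _) (Finset.mem_univ j)
  have h1 : (∑ j', ∑ k', ν (Pi.single i 1) (Pi.single j' 1) k' * ν (Pi.single i 1) (Pi.single j' 1) k')
      ≤ ∑ i', ∑ j', ∑ k', ν (Pi.single i' 1) (Pi.single j' 1) k' * ν (Pi.single i' 1) (Pi.single j' 1) k' :=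
    Finset.single_le_sum (f := fun i' => ∑ j', ∑ k', ν (Pi.single i' 1) (Pi.single j' 1) k' * ν (Pi.single i' 1) (Pi.single j' 1) k')
      (fun _ _ => Finset.sum_nonneg fun _ _ => Finset.sum_nonneg fun _ _ => mul_self_nonneg _)
      (Finset.mem_univ i)
  have : (0:ℝ) < ∑ i', ∑ j', ∑ k', ν (Pi.single i' 1) (Pi.single j' 1) k' * ν (Pi.single i' 1) (Pi.single j' 1) k' := by
    linarith
  exact this

lemma F_hasDeriv {T : ℝ} (μ : ℝ → (Fin n → ℝ) → (Fin n → ℝ) → (Fin n → ℝ))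
    (hsb : ∀ t ∈ Set.Ico (0 : ℝ) T, IsSkewBil (μ t))
    (hflow : ∀ t ∈ Set.Ico (0 : ℝ) T, ∀ x y : Fin n → ℝ,
      HasDerivAt (fun s => μ s x y) (deltaMap (μ t) (Ric (μ t)) x y) t)
    {t : ℝ} (ht : t ∈ Set.Ico (0:ℝ) T) :
    HasDerivAt (fun s => innV (μ s) (μ s))
      (-8 * Matrix.trace (Ric (μ t) * Ric (μ t))) t := by
  have hcomp : ∀ (i j k : Fin n), HasDerivAt (fun s => μ s (Pi.single i 1) (Pi.single j 1) k)
      (deltaMap (μ t) (Ric (μ t)) (Pi.single i 1) (Pi.single j 1) k) t :=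
    fun i j k => (hasDerivAt_pi.mp (hflow t ht _ _)) k
  have h1 : HasDerivAt (fun s => innV (μ s) (μ s))
      (∑ i, ∑ j, ∑ k,
        (deltaMap (μ t) (Ric (μ t)) (Pi.single i 1) (Pi.single j 1) k * μ t (Pi.single i 1) (Pi.single j 1) k
        + μ t (Pi.single i 1) (Pi.single j 1) k * deltaMap (μ t) (Ric (μ t)) (Pi.single i 1) (Pi.single j 1) k)) t := by
    simp only [innV]
    exact HasDerivAt.fun_sum fun i _ => HasDerivAt.fun_sum fun j _ => HasDerivAt.fun_sum fun k _ =>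
      (hcomp i j k).mul (hcomp i j k)
  have hval : (∑ i, ∑ j, ∑ k,
        (deltaMap (μ t) (Ric (μ t)) (Pi.single i 1) (Pi.single j 1) k * μ t (Pi.single i 1) (Pi.single j 1) k
        + μ t (Pi.single i 1) (Pi.single j 1) k * deltaMap (μ t) (Ric (μ t)) (Pi.single i 1) (Pi.single j 1) k))
      = -8 * Matrix.trace (Ric (μ t) * Ric (μ t)) := by
    have e1 : (∑ i, ∑ j, ∑ k,
        (deltaMap (μ t) (Ric (μ t)) (Pi.single i 1) (Pi.single j 1) k * μ t (Pi.single i 1) (Pi.single j 1) k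
        + μ t (Pi.single i 1) (Pi.single j 1) k * deltaMap (μ t) (Ric (μ t)) (Pi.single i 1) (Pi.single j 1) k))
        = 2 * innV (deltaMap (μ t) (Ric (μ t))) (μ t) := by
      rw [innV, Finset.mul_sum]
      refine Finset.sum_congr rfl fun i _ => ?_
      rw [Finset.mul_sum]
      refine Finset.sum_congr rfl fun j _ => ?_
      rw [Finset.mul_sum]
      refine Finset.sum_congr rfl fun k _ => ?_
      ring
    rw [e1, inn_delta (hsb t ht) (Ric (μ t))]
    ring
  exact hval ▸ h1

end Stmt15

open Stmt15 in
/-- decay estimate `‖μ(t)‖² ≤ 1/(t/(2n) + 1/‖μ₀‖²) ≤ 2n/t`. -/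
theorem stmt15 {n : ℕ} (T : ℝ)
    (μ : ℝ → (Fin n → ℝ) → (Fin n → ℝ) → (Fin n → ℝ))
    (μ₀ : (Fin n → ℝ) → (Fin n → ℝ) → (Fin n → ℝ))
    (h0 : μ 0 = μ₀) (hne : μ₀ ≠ (fun _ _ => 0))
    (hsb : ∀ t ∈ Set.Ico (0 : ℝ) T, IsSkewBil (μ t))
    (hflow : ∀ t ∈ Set.Ico (0 : ℝ) T, ∀ x y : Fin n → ℝ,
      HasDerivAt (fun s => μ s x y) (deltaMap (μ t) (Ric (μ t)) x y) t) :
    ∀ t ∈ Set.Ioo (0 : ℝ) T,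
      innV (μ t) (μ t) ≤ 1 / (t / (2 * n) + 1 / innV μ₀ μ₀) ∧
      1 / (t / (2 * n) + 1 / innV μ₀ μ₀) ≤ 2 * n / t := by
  intro t ht
  obtain ⟨ht0, htT⟩ := ht
  have hT0 : (0:ℝ) < T := lt_trans ht0 htT
  have h0mem : (0:ℝ) ∈ Set.Ico (0:ℝ) T := ⟨le_refl 0, hT0⟩
  have hn : 0 < n := by
    rcases Nat.eq_zero_or_pos n with h | h
    · exfalso
      apply hne
      subst h
      funext x y
      funext k
      exact k.elim0
    · exact h
  have hnR : (0:ℝ) < (n:ℝ) := by exact_mod_cast hn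
  have hsb0 : IsSkewBil μ₀ := h0 ▸ hsb 0 h0mem
  have hf0 : 0 < innV μ₀ μ₀ := innV_pos hsb0 hne
  set F : ℝ → ℝ := fun s => innV (μ s) (μ s) with hF
  have hF0 : F 0 = innV μ₀ μ₀ := by rw [hF]; simp [h0]
  have hFd : ∀ s ∈ Set.Ico (0:ℝ) T,
      HasDerivAt F (-8 * Matrix.trace (Ric (μ s) * Ric (μ s))) s :=
    fun s hs => F_hasDeriv μ hsb hflow hs
  have hub : ∀ s ∈ Set.Ico (0:ℝ) T,
      (F s)^2 ≤ 16 * (n:ℝ) * Matrix.trace (Ric (μ s) * Ric (μ s)) := by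
    intro s hs
    have h1 := trace_sq_le (Ric (μ s)) (Ric_symm (μ s))
    have h2 := trace_Ric (μ s)
    have h3 : F s = innV (μ s) (μ s) := rfl
    rw [h2] at h1
    rw [h3]
    nlinarith [h1]
  have htrnn : ∀ s ∈ Set.Ico (0:ℝ) T,
      0 ≤ Matrix.trace (Ric (μ s) * Ric (μ s)) := by
    intro s hs
    nlinarith [hub s hs, sq_nonneg (F s)]
  have hdenom : 0 < t/(2*(n:ℝ)) + 1 / innV μ₀ μ₀ := by positivity
  constructor
  · by_cases hFt : F t ≤ 0
    · exact le_trans hFt (le_of_lt (one_div_pos.mpr hdenom))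
    · push_neg at hFt
      have hsub : Set.Icc (0:ℝ) t ⊆ Set.Ico 0 T :=
        fun s hs => ⟨hs.1, lt_of_le_of_lt hs.2 htT⟩
      have hcont : ContinuousOn F (Set.Icc 0 t) :=
        fun s hs => ((hFd s (hsub hs)).continuousAt).continuousWithinAt
      have hdiff : DifferentiableOn ℝ F (interior (Set.Icc 0 t)) :=
        fun s hs => ((hFd s (hsub (interior_subset hs))).differentiableAt).differentiableWithinAt
      have hanti : AntitoneOn F (Set.Icc 0 t) := by
        apply antitoneOn_of_deriv_nonpos (convex_Icc 0 t) hcont hdiff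
        intro s hs
        rw [interior_Icc] at hs
        have hs' := hsub ⟨hs.1.le, hs.2.le⟩
        rw [(hFd s hs').deriv]
        nlinarith [htrnn s hs']
      have hFpos : ∀ s ∈ Set.Icc (0:ℝ) t, 0 < F s := fun s hs =>
        lt_of_lt_of_le hFt (hanti hs ⟨ht0.le, le_refl t⟩ hs.2)
      set G : ℝ → ℝ := fun s => (F s)⁻¹ - s/(2*(n:ℝ)) with hG
      have hGd : ∀ s ∈ Set.Icc (0:ℝ) t, HasDerivAt G
          (-(-8 * Matrix.trace (Ric (μ s) * Ric (μ s))) / (F s)^2 - 1/(2*(n:ℝ))) s := by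
        intro s hs
        have h1 := (hFd s (hsub hs)).inv (ne_of_gt (hFpos s hs))
        have h2 : HasDerivAt (fun y : ℝ => y/(2*(n:ℝ))) (1/(2*(n:ℝ))) s := by
          simpa using (hasDerivAt_id s).div_const (2*(n:ℝ))
        exact h1.sub h2
      have hGcont : ContinuousOn G (Set.Icc 0 t) :=
        fun s hs => ((hGd s hs).continuousAt).continuousWithinAt
      have hGdiff : DifferentiableOn ℝ G (interior (Set.Icc 0 t)) :=
        fun s hs => ((hGd s (interior_subset hs)).differentiableAt).differentiableWithinAt
      have hmono : MonotoneOn G (Set.Icc 0 t) := by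
        apply monotoneOn_of_deriv_nonneg (convex_Icc 0 t) hGcont hGdiff
        intro s hs
        rw [interior_Icc] at hs
        have hsIcc : s ∈ Set.Icc (0:ℝ) t := ⟨hs.1.le, hs.2.le⟩
        rw [(hGd s hsIcc).deriv]
        have hF2 : 0 < (F s)^2 := pow_pos (hFpos s hsIcc) 2
        have h3 := hub s (hsub hsIcc)
        rw [sub_nonneg, le_div_iff₀ hF2]
        have h4 : (1:ℝ)/(2*(n:ℝ)) * (F s)^2 ≤ 1/(2*(n:ℝ)) * (16 * (n:ℝ) * Matrix.trace (Ric (μ s) * Ric (μ s))) :=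
          mul_le_mul_of_nonneg_left h3 (by positivity)
        have h5 : (1:ℝ)/(2*(n:ℝ)) * (16 * (n:ℝ) * Matrix.trace (Ric (μ s) * Ric (μ s)))
            = 8 * Matrix.trace (Ric (μ s) * Ric (μ s)) := by
          field_simp
          ring
        rw [h5] at h4
        linarith
      have hGle : G 0 ≤ G t := hmono ⟨le_refl 0, ht0.le⟩ ⟨ht0.le, le_refl t⟩ ht0.le
      have hG0 : G 0 = (innV μ₀ μ₀)⁻¹ := by rw [hG]; simp [hF0]
      have hGt : G t = (F t)⁻¹ - t/(2*(n:ℝ)) := rfl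
      have h4 : t/(2*(n:ℝ)) + 1/(innV μ₀ μ₀) ≤ 1/(F t) := by
        rw [hG0, hGt] at hGle
        rw [one_div, one_div]
        linarith
      have h6 := one_div_le_one_div_of_le hdenom h4
      rwa [one_div_one_div] at h6
  · have hle : t/(2*(n:ℝ)) ≤ t/(2*(n:ℝ)) + 1/innV μ₀ μ₀ :=
      le_add_of_nonneg_right (le_of_lt (one_div_pos.mpr hf0))
    calc 1/(t/(2*(n:ℝ)) + 1/innV μ₀ μ₀) ≤ 1/(t/(2*(n:ℝ))) :=
          one_div_le_one_div_of_le (by positivity) hle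
      _ = 2*(n:ℝ)/t := one_div_div _ _
end
end
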